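/- arXiv:1906.10812 — 5 statements merged into one kernel-verified Lean document; each statement's English description precedes it below -/
import Mathlib

section
/- The box spline depends on its direction vectors only up to reordering: if (w₁, …, wₙ) is a permutation of (v₁, …, vₙ) such that w₁, …, w_d are also linearly independent, then M_{w₁,…,wₙ}(x) = M_{v₁,…,vₙ}(x) for Lebesgue-almost every x ∈ ℝ^d. -/
open MeasureTheory

/-! ### Auxiliary measure-theoretic machinery -/

/-- Lebesgue measure restricted to `[0,1] ⊆ ℝ`. -/
noncomputable def mIcc : Measure ℝ := volume.restrict (Set.Icc 0 1)

instance : IsFiniteMeasure mIcc := by constructor; simp [mIcc, Real.volume_Icc]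

@[simp] lemma mIcc_univ : mIcc Set.univ = 1 := by
  simp [mIcc, Measure.restrict_apply, Real.volume_Icc]

lemma pi_mIcc (k : ℕ) : (Measure.pi fun _ : Fin k => mIcc)
    = volume.restrict (Set.univ.pi fun _ : Fin k => Set.Icc (0:ℝ) 1) := by
  refine Measure.pi_eq fun s hs => ?_
  rw [Measure.restrict_apply (MeasurableSet.univ_pi hs), ← Set.pi_inter_distrib,
    volume_pi_pi]
  simp only [mIcc, Measure.restrict_apply (hs _)]

/-- "Convolution" of a measure with the uniform measure on the segment `[0,1] • a`. -/
noncomputable def convBS (d : ℕ) (a : Fin d → ℝ) (ν : Measure (Fin d → ℝ)) :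
    Measure (Fin d → ℝ) :=
  Measure.map (fun p : ℝ × (Fin d → ℝ) => p.1 • a + p.2) (mIcc.prod ν)

lemma measurable_convF (d : ℕ) (a : Fin d → ℝ) :
    Measurable (fun p : ℝ × (Fin d → ℝ) => p.1 • a + p.2) := by fun_prop

instance convBS_finite (d : ℕ) (a : Fin d → ℝ) (ν : Measure (Fin d → ℝ)) [IsFiniteMeasure ν] :
    IsFiniteMeasure (convBS d a ν) := by unfold convBS; infer_instance

/-- The distribution of `∑ tᵢ vᵢ` where the `tᵢ` are uniform on `[0,1]`, defined by
recursion on the list. -/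
noncomputable def muBS (d : ℕ) : List (Fin d → ℝ) → Measure (Fin d → ℝ)
  | [] => Measure.dirac 0
  | a :: l => convBS d a (muBS d l)

instance muBS_finite (d : ℕ) (v : List (Fin d → ℝ)) : IsFiniteMeasure (muBS d v) := by
  induction v with
  | nil => rw [muBS]; infer_instance
  | cons a l ih => rw [muBS]; exact convBS_finite d a (muBS d l)

lemma convBS_comm (d : ℕ) (a b : Fin d → ℝ) (ν : Measure (Fin d → ℝ)) [IsFiniteMeasure ν] :
    convBS d a (convBS d b ν) = convBS d b (convBS d a ν) := by
  have key : ∀ (x y : Fin d → ℝ),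
      Measure.map (fun p : ℝ × (ℝ × (Fin d → ℝ)) => p.1 • x + (p.2.1 • y + p.2.2))
        (mIcc.prod (mIcc.prod ν))
      = convBS d x (convBS d y ν) := by
    intro x y
    unfold convBS
    rw [show mIcc.prod (Measure.map (fun p : ℝ × (Fin d → ℝ) => p.1 • y + p.2) (mIcc.prod ν))
        = Measure.map (Prod.map id (fun p : ℝ × (Fin d → ℝ) => p.1 • y + p.2))
            (mIcc.prod (mIcc.prod ν)) by
      rw [← Measure.map_prod_map _ _ measurable_id (measurable_convF d y), Measure.map_id]]
    rw [Measure.map_map (measurable_convF d x) (measurable_id.prodMap (measurable_convF d y))]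
    rfl
  rw [← key a b, ← key b a]
  have hswap : Measure.map (fun p : ℝ × (ℝ × (Fin d → ℝ)) => (p.2.1, (p.1, p.2.2)))
      (mIcc.prod (mIcc.prod ν)) = mIcc.prod (mIcc.prod ν) := by
    have h1 : Measure.map (MeasurableEquiv.prodAssoc.symm :
        ℝ × (ℝ × (Fin d → ℝ)) ≃ᵐ (ℝ × ℝ) × (Fin d → ℝ)) (mIcc.prod (mIcc.prod ν))
        = (mIcc.prod mIcc).prod ν :=
      ((measurePreserving_prodAssoc mIcc mIcc ν).symm MeasurableEquiv.prodAssoc).map_eq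
    have h2 : Measure.map (Prod.map (Prod.swap : ℝ × ℝ → ℝ × ℝ) (id : (Fin d → ℝ) → _))
        ((mIcc.prod mIcc).prod ν) = (mIcc.prod mIcc).prod ν := by
      rw [← Measure.map_prod_map _ _ measurable_swap measurable_id, Measure.prod_swap,
        Measure.map_id]
    have h3 : Measure.map (MeasurableEquiv.prodAssoc :
        (ℝ × ℝ) × (Fin d → ℝ) ≃ᵐ ℝ × (ℝ × (Fin d → ℝ))) ((mIcc.prod mIcc).prod ν)
        = mIcc.prod (mIcc.prod ν) :=
      (measurePreserving_prodAssoc mIcc mIcc ν).map_eq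
    calc Measure.map (fun p : ℝ × (ℝ × (Fin d → ℝ)) => (p.2.1, (p.1, p.2.2)))
          (mIcc.prod (mIcc.prod ν))
        = Measure.map ((MeasurableEquiv.prodAssoc :
            (ℝ × ℝ) × (Fin d → ℝ) ≃ᵐ ℝ × (ℝ × (Fin d → ℝ))) ∘
            (Prod.map Prod.swap id) ∘ (MeasurableEquiv.prodAssoc.symm :
            ℝ × (ℝ × (Fin d → ℝ)) ≃ᵐ (ℝ × ℝ) × (Fin d → ℝ))) (mIcc.prod (mIcc.prod ν)) := by
          congr 1
      _ = mIcc.prod (mIcc.prod ν) := by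
          rw [← Function.comp_assoc, ← Measure.map_map (by fun_prop) (by fun_prop),
            h1, ← Measure.map_map (by fun_prop) (by fun_prop), h2, h3]
  conv_lhs => rw [← hswap]
  rw [Measure.map_map (by fun_prop) (by fun_prop)]
  congr 1
  funext p
  simp only [Function.comp]
  module

lemma muBS_concat (d : ℕ) (l : List (Fin d → ℝ)) (a : Fin d → ℝ) :
    muBS d (l ++ [a]) = convBS d a (muBS d l) := by
  induction l with
  | nil => rfl
  | cons b l ih =>
      show convBS d b (muBS d (l ++ [a])) = convBS d a (convBS d b (muBS d l))
      rw [ih, convBS_comm]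

lemma muBS_perm (d : ℕ) {v w : List (Fin d → ℝ)} (h : v.Perm w) : muBS d v = muBS d w := by
  induction h with
  | nil => rfl
  | cons a _ ih => show convBS d a _ = convBS d a _; rw [ih]
  | swap x y l => exact convBS_comm d y x (muBS d l)
  | trans _ _ ih1 ih2 => rw [ih1, ih2]

lemma measurable_TBS (d n : ℕ) (v : List (Fin d → ℝ)) :
    Measurable (fun t : Fin n → ℝ => ∑ i, t i • v.getD i.val 0) := by fun_prop

lemma muBS_eq_map (d : ℕ) (v : List (Fin d → ℝ)) :
    muBS d v = Measure.map (fun t : Fin v.length → ℝ => ∑ i, t i • v.getD i.val 0)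
      (Measure.pi fun _ : Fin v.length => mIcc) := by
  induction v with
  | nil =>
      rw [muBS]
      show Measure.dirac 0 = Measure.map (fun t : Fin 0 → ℝ =>
        ∑ i, t i • ([] : List (Fin d → ℝ)).getD i.val 0) (Measure.pi fun _ : Fin 0 => mIcc)
      have : (fun t : Fin 0 → ℝ => ∑ i, t i • ([] : List (Fin d → ℝ)).getD i.val 0)
          = fun _ => (0 : Fin d → ℝ) := by
        funext t; simp
      rw [this, Measure.map_const, Measure.pi_univ]
      simp
  | cons a l ih =>
      set n := l.length with hn
      rw [muBS, ih]
      show convBS d a _ = Measure.map (fun t : Fin (n+1) → ℝ => ∑ i, t i • (a :: l).getD i.val 0)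
        (Measure.pi fun _ : Fin (n+1) => mIcc)
      have hp := measurePreserving_piFinSuccAbove (fun _ : Fin (n+1) => mIcc) 0
      have hmap : Measure.pi (fun _ : Fin (n+1) => mIcc)
          = Measure.map (MeasurableEquiv.piFinSuccAbove (fun _ : Fin (n+1) => ℝ) 0).symm
            (mIcc.prod (Measure.pi fun _ : Fin n => mIcc)) := (hp.symm _).map_eq.symm
      rw [hmap, Measure.map_map (measurable_TBS d (n+1) (a :: l)) (MeasurableEquiv.measurable _)]
      have hcomp : ((fun t : Fin (n+1) → ℝ => ∑ i, t i • (a :: l).getD i.val 0) ∘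
            (MeasurableEquiv.piFinSuccAbove (fun _ : Fin (n+1) => ℝ) 0).symm)
          = (fun p : ℝ × (Fin d → ℝ) => p.1 • a + p.2) ∘
            (Prod.map id (fun t : Fin n → ℝ => ∑ i, t i • l.getD i.val 0)) := by
        funext p
        simp only [Function.comp_apply, MeasurableEquiv.piFinSuccAbove_symm_apply,
          Fin.insertNth_zero, Prod.map_apply, id_eq]
        rw [Fin.sum_univ_succ]
        simp [Fin.cons_zero, Fin.cons_succ, List.getD_cons_zero, List.getD_cons_succ]
      rw [hcomp, ← Measure.map_map (measurable_convF d a)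
        (measurable_id.prodMap (measurable_TBS d n l)),
        ← Measure.map_prod_map _ _ measurable_id (measurable_TBS d n l), Measure.map_id]
      rfl

lemma muBS_eq_map' (d n : ℕ) (v : List (Fin d → ℝ)) (h : v.length = n) :
    muBS d v = Measure.map (fun t : Fin n → ℝ => ∑ i, t i • v.getD i.val 0)
      (Measure.pi fun _ : Fin n => mIcc) := by
  subst h; exact muBS_eq_map d v

lemma convBS_withDensity (d : ℕ) (a : Fin d → ℝ) (g : (Fin d → ℝ) → ENNReal)
    (hg : Measurable g) :
    convBS d a (volume.withDensity g)
      = volume.withDensity (fun x => ∫⁻ s, g (x - s • a) ∂mIcc) := by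
  ext A hA
  rw [convBS, Measure.map_apply (measurable_convF d a) hA,
    Measure.prod_apply ((measurable_convF d a) hA), withDensity_apply _ hA]
  have step1 : ∀ s : ℝ, (volume.withDensity g)
      (Prod.mk s ⁻¹' ((fun p : ℝ × (Fin d → ℝ) => p.1 • a + p.2) ⁻¹' A))
      = ∫⁻ x in A, g (x - s • a) := by
    intro s
    have hpre : (Prod.mk s ⁻¹' ((fun p : ℝ × (Fin d → ℝ) => p.1 • a + p.2) ⁻¹' A))
        = (fun y : Fin d → ℝ => s • a + y) ⁻¹' A := rfl
    have hmeas : Measurable (fun y : Fin d → ℝ => s • a + y) := by fun_prop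
    rw [hpre, withDensity_apply _ (hA.preimage hmeas)]
    have hmp : MeasurePreserving (fun y : Fin d → ℝ => s • a + y) volume volume :=
      measurePreserving_add_left volume (s • a)
    have hemb : MeasurableEmbedding (fun y : Fin d → ℝ => s • a + y) :=
      (MeasurableEquiv.addLeft (s • a)).measurableEmbedding
    have := hmp.setLIntegral_comp_preimage_emb hemb (fun x => g (x - s • a)) A
    simp only [add_sub_cancel_left] at this
    exact this
  simp only [step1]
  rw [lintegral_lintegral_swap (by apply Measurable.aemeasurable; fun_prop)]

/-! ### Properties of the box spline -/

open scoped Classical in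
/-- The box spline `M_{v₁,…,vₙ}` with direction vectors given by the list `v` in `ℝ^d`
(represented as `Fin d → ℝ`), defined recursively: when the list has length `≤ d`
(base case, length `= d` in intended use) it is the normalized indicator of the
parallelepiped spanned by the first `d` vectors, scaled by `1/|det[v₁ ⋯ v_d]|`;
otherwise one integrates out the last direction vector over `[0,1]`. -/
noncomputable def boxSpline (d : ℕ) (v : List (Fin d → ℝ)) : (Fin d → ℝ) → ℝ :=
  if _h : v.length ≤ d then
    fun x =>
      if ∃ t : Fin d → ℝ, (∀ k, t k ∈ Set.Icc (0 : ℝ) 1) ∧ x = ∑ k, t k • v.getD k.val 0 then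
        |Matrix.det (Matrix.of fun i j : Fin d => v.getD j.val 0 i)|⁻¹
      else 0
  else
    fun x => ∫ t in (0 : ℝ)..1, boxSpline d v.dropLast (x - t • v.getLastD 0)
termination_by v.length
decreasing_by
  simp only [List.length_dropLast]
  omega

lemma boxSpline_nonneg (d : ℕ) (v : List (Fin d → ℝ)) (x : Fin d → ℝ) :
    0 ≤ boxSpline d v x := by
  rw [boxSpline]
  split
  · beta_reduce
    split
    · positivity
    · exact le_refl 0
  · exact intervalIntegral.integral_nonneg zero_le_one
      (fun u _ => boxSpline_nonneg d v.dropLast _)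
termination_by v.length
decreasing_by simp only [List.length_dropLast]; omega

lemma boxSpline_measurable (d : ℕ) (v : List (Fin d → ℝ)) :
    Measurable (boxSpline d v) := by
  rw [boxSpline]
  split
  · have hS : MeasurableSet {x : Fin d → ℝ |
        ∃ t : Fin d → ℝ, (∀ k, t k ∈ Set.Icc (0 : ℝ) 1) ∧ x = ∑ k, t k • v.getD k.val 0} := by
      have : {x : Fin d → ℝ |
          ∃ t : Fin d → ℝ, (∀ k, t k ∈ Set.Icc (0 : ℝ) 1) ∧ x = ∑ k, t k • v.getD k.val 0}
          = (fun t : Fin d → ℝ => ∑ k, t k • v.getD k.val 0) ''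
            (Set.univ.pi fun _ : Fin d => Set.Icc (0 : ℝ) 1) := by
        ext x
        simp only [Set.mem_setOf_eq, Set.mem_image, Set.mem_pi, Set.mem_univ, forall_true_left,
          true_implies]
        constructor
        · rintro ⟨t, h1, h2⟩; exact ⟨t, fun k => h1 k, h2.symm⟩
        · rintro ⟨t, h1, h2⟩; exact ⟨t, fun k => h1 k, h2.symm⟩
      rw [this]
      have hc : IsCompact ((fun t : Fin d → ℝ => ∑ k, t k • v.getD k.val 0) ''
          (Set.univ.pi fun _ : Fin d => Set.Icc (0 : ℝ) 1)) := by
        apply (isCompact_univ_pi fun _ => isCompact_Icc).image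
        fun_prop
      exact hc.isClosed.measurableSet
    exact Measurable.ite hS measurable_const measurable_const
  · have hg := boxSpline_measurable d v.dropLast
    have key : ∀ x : Fin d → ℝ, (∫ t in (0:ℝ)..1, boxSpline d v.dropLast (x - t • v.getLastD 0))
        = ∫ t, boxSpline d v.dropLast (x - t • v.getLastD 0)
            ∂(volume.restrict (Set.Ioc (0:ℝ) 1)) := by
      intro x
      rw [intervalIntegral.integral_of_le zero_le_one]
    simp only [key]
    apply StronglyMeasurable.measurable
    apply MeasureTheory.StronglyMeasurable.integral_prod_right'
      (f := fun p : (Fin d → ℝ) × ℝ => boxSpline d v.dropLast (p.1 - p.2 • v.getLastD 0))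
    apply Measurable.stronglyMeasurable
    fun_prop
termination_by v.length
decreasing_by all_goals (simp only [List.length_dropLast]; omega)

lemma getD_dropLast_bs (d : ℕ) (v : List (Fin d → ℝ)) (hv : ¬ v.length ≤ d) (j : Fin d) :
    v.dropLast.getD j.val 0 = v.getD j.val 0 := by
  have h1 : j.val < v.dropLast.length := by
    simp only [List.length_dropLast]; omega
  have h2 : j.val < v.length := by omega
  rw [List.getD_eq_getElem _ _ h1, List.getD_eq_getElem _ _ h2, List.getElem_dropLast]

lemma boxSpline_le (d : ℕ) (v : List (Fin d → ℝ)) (x : Fin d → ℝ) :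
    boxSpline d v x ≤ |Matrix.det (Matrix.of fun i j : Fin d => v.getD j.val 0 i)|⁻¹ := by
  rw [boxSpline]
  split
  · beta_reduce
    split
    · exact le_refl _
    · positivity
  · rename_i hv
    have hmat : (Matrix.of fun i j : Fin d => v.dropLast.getD j.val 0 i)
        = (Matrix.of fun i j : Fin d => v.getD j.val 0 i) := by
      ext i j
      simp only [Matrix.of_apply]
      rw [getD_dropLast_bs d v hv j]
    set C : ℝ := |Matrix.det (Matrix.of fun i j : Fin d => v.getD j.val 0 i)|⁻¹ with hC
    have hb : ∀ u : ℝ, boxSpline d v.dropLast (x - u • v.getLastD 0) ≤ C := by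
      intro u
      have := boxSpline_le d v.dropLast (x - u • v.getLastD 0)
      rwa [hmat] at this
    have hnn : ∀ u : ℝ, 0 ≤ boxSpline d v.dropLast (x - u • v.getLastD 0) :=
      fun u => boxSpline_nonneg d v.dropLast _
    have hCnn : 0 ≤ C := by positivity
    have hmeas : Measurable fun u : ℝ => boxSpline d v.dropLast (x - u • v.getLastD 0) := by
      have := boxSpline_measurable d v.dropLast
      fun_prop
    have hint : IntervalIntegrable
        (fun u : ℝ => boxSpline d v.dropLast (x - u • v.getLastD 0)) volume 0 1 := by
      rw [intervalIntegrable_iff_integrableOn_Ioc_of_le zero_le_one]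
      apply Measure.integrableOn_of_bounded (M := C) (by simp)
        hmeas.aestronglyMeasurable
      filter_upwards with u
      rw [Real.norm_eq_abs, abs_of_nonneg (hnn u)]
      exact hb u
    calc (∫ u in (0:ℝ)..1, boxSpline d v.dropLast (x - u • v.getLastD 0))
        ≤ ∫ _ in (0:ℝ)..1, C :=
          intervalIntegral.integral_mono_on zero_le_one hint intervalIntegrable_const
            (fun u _ => hb u)
      _ = C := by simp
termination_by v.length
decreasing_by all_goals (simp only [List.length_dropLast]; omega)

/-! ### The box spline is the density of `muBS` -/

lemma muBS_base (d : ℕ) (v : List (Fin d → ℝ)) (h : v.length = d)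
    (hli : LinearIndependent ℝ (fun i : Fin d => v.getD i.val 0)) :
    muBS d v = volume.withDensity (fun x => ENNReal.ofReal (boxSpline d v x)) := by
  classical
  set M : Matrix (Fin d) (Fin d) ℝ := Matrix.of fun i j : Fin d => v.getD j.val 0 i with hM
  set T : (Fin d → ℝ) → (Fin d → ℝ) := fun t => ∑ i, t i • v.getD i.val 0 with hTdef
  have hTlin : T = ⇑(Matrix.toLin' M) := by
    funext t
    funext i
    simp only [hTdef, Matrix.toLin'_apply, Matrix.mulVec, dotProduct, Finset.sum_apply,
      Pi.smul_apply, smul_eq_mul, hM, Matrix.of_apply]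
    exact Finset.sum_congr rfl fun j _ => mul_comm _ _
  have hTmeas : Measurable T := by
    rw [hTlin]; exact (Matrix.toLin' M).continuous_of_finiteDimensional.measurable
  have hunit : IsUnit M := by
    apply Matrix.linearIndependent_cols_iff_isUnit.mp
    have : (fun i : Fin d => M.transpose i) = fun i : Fin d => v.getD i.val 0 := by
      funext i; funext j; rfl
    change LinearIndependent ℝ (fun i : Fin d => M.transpose i); rw [this]
    exact hli
  have hdet : M.det ≠ 0 := by
    have := Matrix.isUnit_iff_isUnit_det M |>.mp hunit
    exact this.ne_zero
  have hTinj : Function.Injective T := by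
    rw [hTlin]
    simpa [Matrix.toLin'_apply', Matrix.coe_mulVecLin] using Matrix.mulVec_injective_iff_isUnit.mpr hunit
  set C : Set (Fin d → ℝ) := Set.univ.pi fun _ : Fin d => Set.Icc (0:ℝ) 1 with hCdef
  have hCcompact : IsCompact C := isCompact_univ_pi fun _ => isCompact_Icc
  have hPmeas : MeasurableSet (T '' C) :=
    (hCcompact.image (by
      rw [hTlin]
      exact (Matrix.toLin' M).continuous_of_finiteDimensional)).isClosed.measurableSet
  have lhs : muBS d v = (ENNReal.ofReal |M.det|⁻¹) • volume.restrict (T '' C) := by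
    rw [muBS_eq_map' d d v h, pi_mIcc]
    have : Measure.map T (volume.restrict C)
        = (Measure.map T volume).restrict (T '' C) := by
      rw [Measure.restrict_map hTmeas hPmeas, Set.preimage_image_eq _ hTinj]
    rw [show (Measure.map (fun t : Fin d → ℝ => ∑ i, t i • v.getD i.val 0)
        (volume.restrict C)) = Measure.map T (volume.restrict C) from rfl, this, hTlin,
      Real.map_linearMap_volume_pi_eq_smul_volume_pi (by rwa [LinearMap.det_toLin'])]
    rw [Measure.restrict_smul]
    congr 1
    rw [LinearMap.det_toLin', abs_inv]
  have hbox : (fun x => ENNReal.ofReal (boxSpline d v x))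
      = (T '' C).indicator (fun _ => ENNReal.ofReal |M.det|⁻¹) := by
    funext x
    rw [boxSpline, dif_pos (le_of_eq h)]
    have hmem : (∃ t : Fin d → ℝ, (∀ k, t k ∈ Set.Icc (0 : ℝ) 1)
        ∧ x = ∑ k, t k • v.getD k.val 0) ↔ x ∈ T '' C := by
      constructor
      · rintro ⟨t, h1, h2⟩
        exact ⟨t, fun k _ => h1 k, h2.symm⟩
      · rintro ⟨t, h1, h2⟩
        exact ⟨t, fun k => h1 k (Set.mem_univ k), h2.symm⟩
    by_cases hx : x ∈ T '' C
    · rw [if_pos (hmem.mpr hx), Set.indicator_of_mem hx]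
    · rw [if_neg (fun hc => hx (hmem.mp hc)), Set.indicator_of_notMem hx]
      simp
  rw [lhs, hbox, withDensity_indicator hPmeas, withDensity_const]

lemma muBS_density (d : ℕ) (hd : 1 ≤ d) : ∀ (N : ℕ) (v : List (Fin d → ℝ)),
    v.length = N → d ≤ N →
    LinearIndependent ℝ (fun i : Fin d => v.getD i.val 0) →
    muBS d v = volume.withDensity (fun x => ENNReal.ofReal (boxSpline d v x)) := by
  intro N
  induction N with
  | zero => intro v h1 h2 h3; omega
  | succ k ih =>
      intro v h1 h2 hli
      rcases eq_or_lt_of_le h2 with he | hlt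
      · exact muBS_base d v (by omega) hli
      · have hdk : d ≤ k := by omega
        have hgt : ¬ v.length ≤ d := by omega
        have hne : v ≠ [] := List.ne_nil_of_length_pos (by omega)
        have hv : v.dropLast ++ [v.getLast hne] = v := List.dropLast_append_getLast hne
        have hll : v.dropLast.length = k := by
          simp only [List.length_dropLast]; omega
        have hlil : LinearIndependent ℝ (fun i : Fin d => v.dropLast.getD i.val 0) := by
          have : (fun i : Fin d => v.dropLast.getD i.val 0)
              = fun i : Fin d => v.getD i.val 0 := by
            funext i; exact getD_dropLast_bs d v hgt i
          rw [this]; exact hli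
        have ihl := ih v.dropLast hll hdk hlil
        have hmeasg : Measurable (fun x => ENNReal.ofReal (boxSpline d v.dropLast x)) := by
          have := boxSpline_measurable d v.dropLast
          fun_prop
        conv_lhs => rw [← hv]
        rw [muBS_concat d v.dropLast (v.getLast hne), ihl,
          convBS_withDensity d (v.getLast hne) _ hmeasg]
        congr 1
        funext x
        -- compute the box spline at `x`
        conv_rhs => rw [boxSpline]
        rw [dif_neg hgt]
        have hz : v.getLastD 0 = v.getLast hne := by
          rw [List.getLastD_eq_getLast?, List.getLast?_eq_getLast hne, Option.getD_some]
        rw [hz]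
        set z := v.getLast hne
        set g := boxSpline d v.dropLast with hg
        have hIoc : mIcc = volume.restrict (Set.Ioc (0:ℝ) 1) :=
          (Measure.restrict_congr_set Ioc_ae_eq_Icc).symm
        set Cb : ℝ := |Matrix.det (Matrix.of fun i j : Fin d => v.dropLast.getD j.val 0 i)|⁻¹
        have hmeas : Measurable fun u : ℝ => g (x - u • z) := by
          have := boxSpline_measurable d v.dropLast
          fun_prop
        have hint : Integrable (fun u : ℝ => g (x - u • z))
            (volume.restrict (Set.Ioc (0:ℝ) 1)) := by
          apply Measure.integrableOn_of_bounded (M := Cb) (by simp)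
            hmeas.aestronglyMeasurable
          filter_upwards with u
          rw [Real.norm_eq_abs, abs_of_nonneg (boxSpline_nonneg d v.dropLast _)]
          exact boxSpline_le d v.dropLast _
        rw [hIoc, intervalIntegral.integral_of_le zero_le_one,
          ofReal_integral_eq_lintegral_ofReal hint
            (Filter.Eventually.of_forall fun u => boxSpline_nonneg d v.dropLast _)]

/-- The box spline depends on its direction vectors only up to reordering:
if `(w₁,…,wₙ)` is a permutation of `(v₁,…,vₙ)` such that `w₁,…,w_d` are also linearly
independent, then `M_{w₁,…,wₙ} = M_{v₁,…,vₙ}` Lebesgue-almost everywhere. -/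
theorem boxSpline_perm
    (d n : ℕ) (hd : 1 ≤ d) (hdn : d ≤ n)
    (v : List (Fin d → ℝ)) (hlen : v.length = n)
    (hli : LinearIndependent ℝ (fun i : Fin d => v.getD i.val 0))
    (w : List (Fin d → ℝ)) (hperm : v.Perm w)
    (hliw : LinearIndependent ℝ (fun i : Fin d => w.getD i.val 0)) :
    ∀ᵐ x : Fin d → ℝ ∂volume, boxSpline d w x = boxSpline d v x := by
  have hlw : w.length = n := by rw [← hperm.length_eq]; exact hlen
  have h1 := muBS_density d hd n v hlen hdn hli
  have h2 := muBS_density d hd n w hlw hdn hliw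
  have heq : volume.withDensity (fun x => ENNReal.ofReal (boxSpline d w x))
      = volume.withDensity (fun x => ENNReal.ofReal (boxSpline d v x)) := by
    rw [← h1, ← h2, muBS_perm d hperm]
  have hmw : Measurable (fun x => ENNReal.ofReal (boxSpline d w x)) := by
    have := boxSpline_measurable d w; fun_prop
  have hmv : Measurable (fun x => ENNReal.ofReal (boxSpline d v x)) := by
    have := boxSpline_measurable d v; fun_prop
  have hae := (withDensity_eq_iff_of_sigmaFinite hmw.aemeasurable hmv.aemeasurable).mp heq
  filter_upwards [hae] with x hx
  exact (ENNReal.ofReal_eq_ofReal_iff (boxSpline_nonneg d w x) (boxSpline_nonneg d v x)).mp hx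
end

section
/- Suppose n > d and that the box spline M_{v₁,…,v_{n−1}} (obtained by deleting the last direction vector) is continuous and bounded on ℝ^d. Then for every x ∈ ℝ^d the box spline M_{v₁,…,vₙ} has directional derivative along vₙ at x, and D_{vₙ} M_{v₁,…,vₙ}(x) = M_{v₁,…,v_{n−1}}(x) − M_{v₁,…,v_{n−1}}(x − vₙ). -/
open MeasureTheory

/-- Suppose `n > d` and that the box spline `M_{v₁,…,v_{n−1}}` (obtained by
deleting the last direction vector) is continuous and bounded on `ℝ^d`. Then for every
`x` the box spline `M_{v₁,…,vₙ}` has directional derivative along `vₙ` at `x`, equal to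
`M_{v₁,…,v_{n−1}}(x) − M_{v₁,…,v_{n−1}}(x − vₙ)`. -/
theorem boxSpline_directional_deriv_last
    (d n : ℕ) (hd : 1 ≤ d) (hdn : d < n)
    (v : List (Fin d → ℝ)) (hlen : v.length = n)
    (hli : LinearIndependent ℝ (fun i : Fin d => v.getD i.val 0))
    (hcont : Continuous (boxSpline d v.dropLast))
    (hbd : ∃ C : ℝ, ∀ x, |boxSpline d v.dropLast x| ≤ C) :
    ∀ x : Fin d → ℝ,
      HasDerivAt (fun s : ℝ => boxSpline d v (x + s • v.getLastD 0))
        (boxSpline d v.dropLast x - boxSpline d v.dropLast (x - v.getLastD 0)) 0 := by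
  intro x
  set w := v.getLastD 0 with hw
  set f := boxSpline d v.dropLast with hf
  set h : ℝ → ℝ := fun u => f (x + u • w) with hh
  have hhcont : Continuous h := by
    apply hcont.comp
    exact continuous_const.add (continuous_id.smul continuous_const)
  have hunfold : ∀ x' : Fin d → ℝ,
      boxSpline d v x' = ∫ t in (0 : ℝ)..1, f (x' - t • w) := by
    intro x'
    rw [boxSpline]
    rw [dif_neg (by omega)]
  have key : ∀ s : ℝ, boxSpline d v (x + s • w) =
      (∫ u in (0 : ℝ)..s, h u) - ∫ u in (0 : ℝ)..(s - 1), h u := by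
    intro s
    rw [hunfold]
    have : ∀ t : ℝ, x + s • w - t • w = x + (s - t) • w := by
      intro t
      rw [sub_smul]
      module
    have e1 : (∫ t in (0 : ℝ)..1, f (x + s • w - t • w))
        = ∫ t in (0 : ℝ)..1, h (s - t) := by
      refine intervalIntegral.integral_congr fun t _ => ?_
      rw [this t, hh]
    rw [e1, intervalIntegral.integral_comp_sub_left h s]
    rw [sub_zero]
    rw [← intervalIntegral.integral_interval_sub_left
      (hhcont.intervalIntegrable 0 s) (hhcont.intervalIntegrable 0 (s - 1))]
  have hF1 : HasDerivAt (fun s : ℝ => ∫ u in (0 : ℝ)..s, h u) (h 0) 0 :=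
    intervalIntegral.integral_hasDerivAt_right (hhcont.intervalIntegrable 0 0)
      (hhcont.stronglyMeasurableAtFilter _ _) hhcont.continuousAt
  have hF2' : HasDerivAt (fun s : ℝ => ∫ u in (0 : ℝ)..s, h u) (h (-1)) (-1) :=
    intervalIntegral.integral_hasDerivAt_right (hhcont.intervalIntegrable 0 (-1))
      (hhcont.stronglyMeasurableAtFilter _ _) hhcont.continuousAt
  have hsub : HasDerivAt (fun s : ℝ => s - 1) 1 0 := by
    simpa using (hasDerivAt_id (0 : ℝ)).sub_const 1
  have hF2 : HasDerivAt (fun s : ℝ => ∫ u in (0 : ℝ)..(s - 1), h u) (h (-1)) 0 := by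
    have := HasDerivAt.comp (0 : ℝ) (by simpa using hF2') hsub
    simpa [Function.comp_def] using this
  have : HasDerivAt (fun s : ℝ => (∫ u in (0 : ℝ)..s, h u) - ∫ u in (0 : ℝ)..(s - 1), h u)
      (h 0 - h (-1)) 0 := hF1.sub hF2
  have h0 : h 0 = f x := by simp [hh]
  have h1 : h (-1) = f (x - w) := by
    simp only [hh, neg_smul, one_smul]
    congr 1
  rw [← h0, ← h1]
  exact this.congr_of_eventuallyEq (Filter.Eventually.of_forall fun s => key s)
end

section
/- Let E = (v₁, …, vₙ) and F = (w₁, …, w_m) be two lists of vectors in ℝ^d with n ≥ d, m ≥ d, such that v₁, …, v_d are linearly independent and w₁, …, w_d are linearly independent. Then the box spline of the concatenated list E ++ F = (v₁, …, vₙ, w₁, …, w_m) equals the convolution of the two box splines: for Lebesgue-almost every x ∈ ℝ^d, M_{E++F}(x) = ∫_{ℝ^d} M_E(x − y) · M_F(y) dy. -/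
open scoped ENNReal


open MeasureTheory

open scoped Classical in
noncomputable def lB (d : ℕ) (v : List (Fin d → ℝ)) : (Fin d → ℝ) → ℝ≥0∞ :=
  if _h : v.length ≤ d then
    fun x =>
      if ∃ t : Fin d → ℝ, (∀ k, t k ∈ Set.Icc (0 : ℝ) 1) ∧ x = ∑ k, t k • v.getD k.val 0 then
        ENNReal.ofReal |Matrix.det (Matrix.of fun i j : Fin d => v.getD j.val 0 i)|⁻¹
      else 0
  else
    fun x => ∫⁻ t in Set.Ioc (0:ℝ) 1, lB d v.dropLast (x - t • v.getLastD 0)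
termination_by v.length
decreasing_by
  simp only [List.length_dropLast]
  omega

open scoped Classical in
lemma lB_base (d : ℕ) (v : List (Fin d → ℝ)) (h : v.length ≤ d) (x : Fin d → ℝ) :
    lB d v x =
      if ∃ t : Fin d → ℝ, (∀ k, t k ∈ Set.Icc (0 : ℝ) 1) ∧ x = ∑ k, t k • v.getD k.val 0 then
        ENNReal.ofReal |Matrix.det (Matrix.of fun i j : Fin d => v.getD j.val 0 i)|⁻¹
      else 0 := by
  rw [lB]; simp [h]

lemma lB_rec (d : ℕ) (v : List (Fin d → ℝ)) (h : d < v.length) (x : Fin d → ℝ) :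
    lB d v x = ∫⁻ t in Set.Ioc (0:ℝ) 1, lB d v.dropLast (x - t • v.getLastD 0) := by
  rw [lB]; simp [Nat.not_le.mpr h]

lemma getD_dropLast {α : Type*} (v : List α) (j : ℕ) (hj : j < v.length - 1) (a : α) :
    v.dropLast.getD j a = v.getD j a := by
  have h1 : j < v.dropLast.length := by simpa using hj
  have h2 : j < v.length := by omega
  rw [List.getD_eq_getElem _ _ h1, List.getD_eq_getElem _ _ h2, List.getElem_dropLast]

open scoped Classical in
lemma measurable_lB_base (d : ℕ) (v : List (Fin d → ℝ)) (h : v.length ≤ d) :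
    Measurable (lB d v) := by
  have : lB d v = fun x =>
      if ∃ t : Fin d → ℝ, (∀ k, t k ∈ Set.Icc (0 : ℝ) 1) ∧ x = ∑ k, t k • v.getD k.val 0 then
        ENNReal.ofReal |Matrix.det (Matrix.of fun i j : Fin d => v.getD j.val 0 i)|⁻¹
      else 0 := funext fun x => lB_base d v h x
  rw [this]
  have hS : MeasurableSet {x : Fin d → ℝ | ∃ t : Fin d → ℝ,
      (∀ k, t k ∈ Set.Icc (0 : ℝ) 1) ∧ x = ∑ k, t k • v.getD k.val 0} := by
    have heq : {x : Fin d → ℝ | ∃ t : Fin d → ℝ,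
        (∀ k, t k ∈ Set.Icc (0 : ℝ) 1) ∧ x = ∑ k, t k • v.getD k.val 0} =
        (fun t : Fin d → ℝ => ∑ k, t k • v.getD k.val 0) ''
          (Set.univ.pi fun _ => Set.Icc (0:ℝ) 1) := by
      ext x
      constructor
      · rintro ⟨t, ht, rfl⟩; exact ⟨t, fun k _ => ht k, rfl⟩
      · rintro ⟨t, ht, rfl⟩; exact ⟨t, fun k => ht k trivial, rfl⟩
    rw [heq]
    refine (IsCompact.image ?_ ?_).measurableSet
    · exact isCompact_univ_pi fun _ => isCompact_Icc
    · exact continuous_finset_sum _ fun k _ => (continuous_apply k).smul continuous_const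
  exact Measurable.ite hS measurable_const measurable_const

lemma measurable_lB_aux (d : ℕ) (n : ℕ) : ∀ v : List (Fin d → ℝ), v.length ≤ n →
    Measurable (lB d v) := by
  induction n with
  | zero => intro v hv; exact measurable_lB_base d v (by omega)
  | succ n ih =>
    intro v hv
    by_cases h : v.length ≤ d
    · exact measurable_lB_base d v h
    · have h' : d < v.length := Nat.not_le.mp h
      have : lB d v = fun x =>
          ∫⁻ t in Set.Ioc (0:ℝ) 1, lB d v.dropLast (x - t • v.getLastD 0) :=
        funext fun x => lB_rec d v h' x
      rw [this]
      apply Measurable.lintegral_prod_right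
      exact (ih v.dropLast (by simp; omega)).comp
        ((continuous_fst.sub (continuous_snd.smul continuous_const)).measurable)

lemma measurable_lB (d : ℕ) (v : List (Fin d → ℝ)) : Measurable (lB d v) :=
  measurable_lB_aux d v.length v le_rfl

lemma lB_le_aux (d : ℕ) (n : ℕ) : ∀ v : List (Fin d → ℝ), v.length ≤ n → ∀ x,
    lB d v x ≤ ENNReal.ofReal |Matrix.det (Matrix.of fun i j : Fin d => v.getD j.val 0 i)|⁻¹ := by
  induction n with
  | zero =>
    intro v hv x
    rw [lB_base d v (by omega)]
    split
    · exact le_rfl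
    · exact zero_le
  | succ n ih =>
    intro v hv x
    by_cases h : v.length ≤ d
    · rw [lB_base d v h]; split; exacts [le_rfl, zero_le]
    · have h' : d < v.length := Nat.not_le.mp h
      have hbase : (Matrix.of fun i j : Fin d => v.dropLast.getD j.val 0 i) =
          (Matrix.of fun i j : Fin d => v.getD j.val 0 i) := by
        ext i j
        simp only [Matrix.of_apply]
        rw [getD_dropLast v j.val (by omega)]
      rw [lB_rec d v h' x]
      calc ∫⁻ t in Set.Ioc (0:ℝ) 1, lB d v.dropLast (x - t • v.getLastD 0)
          ≤ ∫⁻ _ in Set.Ioc (0:ℝ) 1,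
            ENNReal.ofReal |Matrix.det (Matrix.of fun i j : Fin d => v.getD j.val 0 i)|⁻¹ := by
            refine lintegral_mono fun t => ?_
            have := ih v.dropLast (by simp; omega) (x - t • v.getLastD 0)
            rwa [hbase] at this
        _ = ENNReal.ofReal |Matrix.det (Matrix.of fun i j : Fin d => v.getD j.val 0 i)|⁻¹ := by
            rw [setLIntegral_const, Real.volume_Ioc]
            norm_num

lemma lB_ne_top (d : ℕ) (v : List (Fin d → ℝ)) (x : Fin d → ℝ) : lB d v x ≠ ⊤ :=
  ne_top_of_le_ne_top ENNReal.ofReal_ne_top (lB_le_aux d v.length v le_rfl x)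

open scoped Classical in
lemma box_base (d : ℕ) (v : List (Fin d → ℝ)) (h : v.length ≤ d) (x : Fin d → ℝ) :
    boxSpline d v x =
      if ∃ t : Fin d → ℝ, (∀ k, t k ∈ Set.Icc (0 : ℝ) 1) ∧ x = ∑ k, t k • v.getD k.val 0 then
        |Matrix.det (Matrix.of fun i j : Fin d => v.getD j.val 0 i)|⁻¹
      else 0 := by
  rw [boxSpline]; simp [h]

lemma box_rec (d : ℕ) (v : List (Fin d → ℝ)) (h : d < v.length) (x : Fin d → ℝ) :
    boxSpline d v x = ∫ t in (0:ℝ)..1, boxSpline d v.dropLast (x - t • v.getLastD 0) := by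
  rw [boxSpline]; simp [Nat.not_le.mpr h]

lemma box_eq_toReal_aux (d : ℕ) (n : ℕ) : ∀ v : List (Fin d → ℝ), v.length ≤ n → ∀ x,
    boxSpline d v x = (lB d v x).toReal := by
  induction n with
  | zero =>
    intro v hv x
    rw [box_base d v (by omega), lB_base d v (by omega)]
    split
    · rw [ENNReal.toReal_ofReal (inv_nonneg.mpr (abs_nonneg _))]
    · simp
  | succ n ih =>
    intro v hv x
    by_cases h : v.length ≤ d
    · rw [box_base d v h, lB_base d v h]
      split
      · rw [ENNReal.toReal_ofReal (inv_nonneg.mpr (abs_nonneg _))]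
      · simp
    · have h' : d < v.length := Nat.not_le.mp h
      have hlen : v.dropLast.length ≤ n := by simp; omega
      rw [box_rec d v h' x, lB_rec d v h' x,
        intervalIntegral.integral_of_le (zero_le_one)]
      have : ∀ t : ℝ, boxSpline d v.dropLast (x - t • v.getLastD 0) =
          (lB d v.dropLast (x - t • v.getLastD 0)).toReal := fun t => ih _ hlen _
      rw [MeasureTheory.integral_congr_ae (Filter.Eventually.of_forall fun t => this t)]
      exact MeasureTheory.integral_toReal
        (((measurable_lB d v.dropLast).comp
          ((continuous_const.sub (continuous_id.smul continuous_const)).measurable :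
            Measurable fun t : ℝ => x - t • v.getLastD 0)).aemeasurable)
        (Filter.Eventually.of_forall fun t => (lB_ne_top d _ _).lt_top)


noncomputable def cubeM (n : ℕ) : Measure (Fin n → ℝ) :=
  Measure.pi fun _ => (volume : Measure ℝ).restrict (Set.Ioc 0 1)

instance (n : ℕ) : SFinite (cubeM n) := by unfold cubeM; infer_instance
instance (n : ℕ) : SigmaFinite (cubeM n) := by unfold cubeM; infer_instance

lemma cubeM_eq_restrict (n : ℕ) :
    cubeM n = (volume : Measure (Fin n → ℝ)).restrict (Set.univ.pi fun _ => Set.Ioc 0 1) := by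
  refine Measure.pi_eq fun s hs => ?_
  rw [Measure.restrict_apply (MeasurableSet.univ_pi hs), ← Set.pi_inter_distrib, volume_pi,
    Measure.pi_pi]
  simp_rw [Measure.restrict_apply (hs _)]

lemma measurable_lB_affine (d : ℕ) (v : List (Fin d → ℝ)) {α : Type*} [MeasurableSpace α]
    {φ : α → Fin d → ℝ} (hφ : Measurable φ) : Measurable fun a => lB d v (φ a) :=
  (measurable_lB d v).comp hφ

lemma peel (d : ℕ) (E : List (Fin d → ℝ)) (hE : d ≤ E.length) (T : List (Fin d → ℝ)) :
    ∀ (n : ℕ), T.length = n → ∀ x : Fin d → ℝ,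
    lB d (E ++ T) x =
      ∫⁻ t, lB d E (x - ∑ k : Fin n, t k • T.getD k.val 0) ∂(cubeM n) := by
  induction T using List.reverseRecOn with
  | nil =>
    rintro n hn x
    obtain rfl : n = 0 := by simpa using hn.symm
    simp only [List.append_nil, Finset.univ_eq_empty, Finset.sum_empty, sub_zero]
    simp [cubeM, Measure.pi_univ]
  | append_singleton T' w ih =>
    rintro m hm x
    obtain rfl : m = T'.length + 1 := by simp at hm; omega
    have hlen : d < (E ++ (T' ++ [w])).length := by simp; omega
    set n := T'.length with hn
    have hlast : (E ++ (T' ++ [w])).getLastD 0 = w := by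
      rw [← List.append_assoc]
      exact List.getLastD_concat
    have hdrop : (E ++ (T' ++ [w])).dropLast = E ++ T' := by
      rw [← List.append_assoc, List.dropLast_concat]
    rw [lB_rec d _ hlen x, hlast, hdrop]
    have hsum : ∀ (a : ℝ) (b : Fin n → ℝ),
        (∑ k : Fin (n+1), (Fin.snoc b a : Fin (n+1) → ℝ) k • (T' ++ [w]).getD k.val 0)
          = (∑ k : Fin n, b k • T'.getD k.val 0) + a • w := by
      intro a b
      rw [Fin.sum_univ_castSucc]
      congr 1
      · refine Finset.sum_congr rfl fun k _ => ?_
        rw [Fin.snoc_castSucc]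
        congr 1
        have hk : (k.castSucc : Fin (n+1)).val < T'.length := k.isLt
        rw [List.getD_eq_getElem _ _ (by have := k.isLt; simp; omega : ((k.castSucc : Fin (n+1)).val < (T' ++ [w]).length)),
          List.getD_eq_getElem _ _ k.isLt, List.getElem_append_left hk]
        rfl
      · rw [Fin.snoc_last]
        congr 1
        have : ((Fin.last n).val) = T'.length := rfl
        rw [List.getD_eq_getElem _ _ (by simp; omega : ((Fin.last n).val < (T' ++ [w]).length))]
        simp [List.getElem_append_right, this, hn]
    have hg : Measurable fun u : Fin (n+1) → ℝ =>
        lB d E (x - ∑ k : Fin (n+1), u k • (T' ++ [w]).getD k.val 0) :=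
      measurable_lB_affine d E (measurable_const.sub
        (Finset.measurable_sum _ fun k _ => (measurable_pi_apply k).smul_const _))
    set f : ℝ × (Fin n → ℝ) → ℝ≥0∞ := fun p =>
      lB d E (x - ∑ k : Fin (n+1), (Fin.snoc p.2 p.1 : Fin (n+1) → ℝ) k •
        (T' ++ [w]).getD k.val 0) with hf
    have hmp := measurePreserving_piFinSuccAbove
      (fun _ : Fin (n+1) => (volume : Measure ℝ).restrict (Set.Ioc 0 1)) (Fin.last n)
    have hfm : Measurable f := by
      have : Measurable fun p : ℝ × (Fin n → ℝ) => (Fin.snoc p.2 p.1 : Fin (n+1) → ℝ) := by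
        refine measurable_pi_iff.mpr fun j => ?_
        induction j using Fin.lastCases with
        | last => simpa using measurable_fst
        | cast j => simpa [Fin.snoc_castSucc, Function.comp_def] using (measurable_pi_apply j).comp measurable_snd
      exact hg.comp this
    have hcomp : ∀ u : Fin (n+1) → ℝ,
        f (MeasurableEquiv.piFinSuccAbove (fun _ : Fin (n+1) => ℝ) (Fin.last n) u) =
          lB d E (x - ∑ k : Fin (n+1), u k • (T' ++ [w]).getD k.val 0) := by
      intro u
      have : (Fin.snoc (fun j => u ((Fin.last n).succAbove j)) (u (Fin.last n)) :
          Fin (n+1) → ℝ) = u := by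
        funext j
        induction j using Fin.lastCases with
        | last => rw [Fin.snoc_last]
        | cast j => rw [Fin.snoc_castSucc]; simp [Fin.succAbove_last]
      show lB d E _ = _
      congr 2
      rw [show (MeasurableEquiv.piFinSuccAbove (fun _ : Fin (n+1) => ℝ) (Fin.last n) u) =
        (u (Fin.last n), fun j => u ((Fin.last n).succAbove j)) from rfl]
      exact congrArg (fun z => ∑ k : Fin (n+1), z k • (T' ++ [w]).getD k.val 0) this
    calc (∫⁻ t in Set.Ioc (0:ℝ) 1, lB d (E ++ T') (x - t • w))
        = ∫⁻ a in Set.Ioc (0:ℝ) 1, ∫⁻ b,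
            lB d E (x - a • w - ∑ k : Fin n, b k • T'.getD k.val 0) ∂(cubeM n) := by
          refine lintegral_congr fun a => ?_
          exact ih n rfl (x - a • w)
      _ = ∫⁻ a in Set.Ioc (0:ℝ) 1, ∫⁻ b, f (a, b) ∂(cubeM n) := by
          refine lintegral_congr fun a => lintegral_congr fun b => ?_
          rw [hf]; simp only []
          rw [hsum a b]
          congr 1
          abel
      _ = ∫⁻ p, f p ∂((volume.restrict (Set.Ioc (0:ℝ) 1)).prod (cubeM n)) := by
          rw [lintegral_prod f hfm.aemeasurable]
      _ = ∫⁻ t, lB d E (x - ∑ k : Fin (n+1), t k • (T' ++ [w]).getD k.val 0) ∂(cubeM (n+1)) := by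
          rw [show cubeM n = Measure.pi (fun _ : Fin n =>
              (volume : Measure ℝ).restrict (Set.Ioc 0 1)) from rfl,
            show cubeM (n+1) = Measure.pi (fun _ : Fin (n+1) =>
              (volume : Measure ℝ).restrict (Set.Ioc 0 1)) from rfl,
            ← hmp.lintegral_comp hfm]
          exact lintegral_congr hcomp


lemma main_base (d : ℕ) (E : List (Fin d → ℝ)) (hE : d ≤ E.length)
    (F : List (Fin d → ℝ)) (hF : F.length = d)
    (hliF : LinearIndependent ℝ (fun i : Fin d => F.getD i.val 0)) (x : Fin d → ℝ) :
    lB d (E ++ F) x = ∫⁻ y, lB d E (x - y) * lB d F y := by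
  classical
  set M : Matrix (Fin d) (Fin d) ℝ := Matrix.of fun i j => F.getD j.val 0 i with hM
  have hunit : IsUnit M := by
    rw [← Matrix.linearIndependent_cols_iff_isUnit]
    exact hliF
  have hdet : M.det ≠ 0 := ((Matrix.isUnit_iff_isUnit_det M).mp hunit).ne_zero
  set L : (Fin d → ℝ) →ₗ[ℝ] (Fin d → ℝ) := Matrix.toLin' M with hL
  have hLdet : LinearMap.det L = M.det := LinearMap.det_toLin' M
  have hLx : ∀ t : Fin d → ℝ, L t = ∑ k : Fin d, t k • F.getD k.val 0 := by
    intro t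
    funext i
    rw [hL, Matrix.toLin'_apply]
    simp only [Matrix.mulVec, dotProduct, Finset.sum_apply, Pi.smul_apply, smul_eq_mul,
      hM, Matrix.of_apply]
    exact Finset.sum_congr rfl fun j _ => mul_comm _ _
  have hinj : Function.Injective L := by
    have := Matrix.mulVec_injective_iff_isUnit.mpr hunit
    exact this
  have hLmeas : Measurable L := L.continuous_of_finiteDimensional.measurable
  set S : Set (Fin d → ℝ) := {y | ∃ t : Fin d → ℝ,
    (∀ k, t k ∈ Set.Icc (0 : ℝ) 1) ∧ y = ∑ k, t k • F.getD k.val 0} with hSdef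
  have hSimage : S = L '' (Set.univ.pi fun _ => Set.Icc (0:ℝ) 1) := by
    ext y
    constructor
    · rintro ⟨t, ht, rfl⟩; exact ⟨t, fun k _ => ht k, hLx t⟩
    · rintro ⟨t, ht, rfl⟩; exact ⟨t, fun k => ht k trivial, hLx t⟩
  have hScube : MeasurableSet (Set.univ.pi fun _ : Fin d => Set.Icc (0:ℝ) 1) :=
    MeasurableSet.univ_pi fun _ => measurableSet_Icc
  have hS : MeasurableSet S := by
    rw [hSimage]
    exact (((isCompact_univ_pi fun _ => isCompact_Icc).image
      L.continuous_of_finiteDimensional)).measurableSet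
  have hFind : lB d F = S.indicator fun _ => ENNReal.ofReal |M.det|⁻¹ := by
    funext y
    rw [lB_base d F hF.le y]
    by_cases hy : ∃ t : Fin d → ℝ, (∀ k, t k ∈ Set.Icc (0:ℝ) 1) ∧ y = ∑ k, t k • F.getD k.val 0
    · rw [if_pos hy, Set.indicator_of_mem (show y ∈ S from hy)]
    · rw [if_neg hy, Set.indicator_of_notMem (show y ∉ S from hy)]
  have hgmeas : Measurable fun y => lB d E (x - y) :=
    (measurable_lB d E).comp (measurable_const.sub measurable_id)
  have hmap : Measure.map L volume = ENNReal.ofReal |M.det|⁻¹ • volume := by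
    have := Real.map_linearMap_volume_pi_eq_smul_volume_pi (f := L) (by rw [hLdet]; exact hdet)
    rwa [hLdet, abs_inv] at this
  have hvol : ENNReal.ofReal |M.det| • Measure.map L volume = volume := by
    rw [hmap, smul_smul, ← ENNReal.ofReal_mul (abs_nonneg _),
      mul_inv_cancel₀ (abs_ne_zero.mpr hdet), ENNReal.ofReal_one, one_smul]
  have hpre : L ⁻¹' S = Set.univ.pi fun _ : Fin d => Set.Icc (0:ℝ) 1 := by
    ext t
    simp only [Set.mem_preimage, hSimage]
    constructor
    · rintro ⟨u, hu, huv⟩; rwa [← hinj huv]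
    · intro ht; exact ⟨t, ht, rfl⟩
  calc lB d (E ++ F) x
      = ∫⁻ t, lB d E (x - ∑ k : Fin d, t k • F.getD k.val 0) ∂(cubeM d) :=
        peel d E hE F d hF x
    _ = ∫⁻ t in Set.univ.pi fun _ : Fin d => Set.Ioc (0:ℝ) 1, lB d E (x - L t) := by
        rw [cubeM_eq_restrict]
        exact lintegral_congr fun t => by rw [hLx]
    _ = ∫⁻ t in Set.univ.pi fun _ : Fin d => Set.Icc (0:ℝ) 1, lB d E (x - L t) := by
        refine setLIntegral_congr ?_
        have h1 := Measure.univ_pi_Ioc_ae_eq_Icc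
          (μ := fun _ : Fin d => (volume : Measure ℝ)) (f := fun _ => (0:ℝ)) (g := fun _ => 1)
        rw [← Set.pi_univ_Icc] at h1
        rwa [← volume_pi] at h1
    _ = ∫⁻ t in L ⁻¹' S, lB d E (x - L t) := by rw [hpre]
    _ = ∫⁻ y in S, lB d E (x - y) ∂(Measure.map L volume) := by
        rw [Measure.restrict_map hLmeas hS, lintegral_map hgmeas hLmeas]
    _ = ENNReal.ofReal |M.det|⁻¹ * ∫⁻ y in S, lB d E (x - y) ∂volume := by
        rw [hmap, Measure.restrict_smul, lintegral_smul_measure, smul_eq_mul]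
    _ = ∫⁻ y, lB d E (x - y) * lB d F y := by
        rw [hFind, ← lintegral_indicator hS, ← lintegral_const_mul _ ?m]
        · refine lintegral_congr fun y => ?_
          by_cases hy : y ∈ S
          · rw [Set.indicator_of_mem hy, Set.indicator_of_mem hy]; ring
          · rw [Set.indicator_of_notMem hy, Set.indicator_of_notMem hy, mul_zero, mul_zero]
        case m => exact hgmeas.indicator hS


lemma main_lemma (d : ℕ) (hd : 1 ≤ d) (E : List (Fin d → ℝ)) (hE : d ≤ E.length) :
    ∀ (m : ℕ) (F : List (Fin d → ℝ)), F.length = d + m →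
      LinearIndependent ℝ (fun i : Fin d => F.getD i.val 0) → ∀ x : Fin d → ℝ,
      lB d (E ++ F) x = ∫⁻ y, lB d E (x - y) * lB d F y := by
  intro m
  induction m with
  | zero => intro F hFlen hliF x; exact main_base d E hE F hFlen hliF x
  | succ m ih =>
    intro F hFlen hliF x
    have hFne : F ≠ [] := by intro h; rw [h] at hFlen; simp at hFlen
    obtain ⟨F', w, rfl⟩ : ∃ F' w, F = F' ++ [w] :=
      ⟨F.dropLast, F.getLast hFne, (List.dropLast_append_getLast hFne).symm⟩
    have hF'len : F'.length = d + m := by simp at hFlen; omega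
    have hliF' : LinearIndependent ℝ (fun i : Fin d => F'.getD i.val 0) := by
      have : (fun i : Fin d => F'.getD i.val 0) =
          fun i : Fin d => (F' ++ [w]).getD i.val 0 := by
        funext i
        have := getD_dropLast (F' ++ [w]) i.val (by simp; omega) (0 : Fin d → ℝ)
        rwa [List.dropLast_concat] at this
      rw [this]; exact hliF
    have hlen : d < (E ++ (F' ++ [w])).length := by simp; omega
    have hlast : (E ++ (F' ++ [w])).getLastD 0 = w := by
      rw [← List.append_assoc]; exact List.getLastD_concat
    have hdrop : (E ++ (F' ++ [w])).dropLast = E ++ F' := by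
      rw [← List.append_assoc, List.dropLast_concat]
    have hmF' : ∀ z : Fin d → ℝ, Measurable fun s : ℝ => lB d F' (z - s • w) :=
      fun z => (measurable_lB d F').comp
        (measurable_const.sub (measurable_id.smul_const _))
    rw [lB_rec d _ hlen x, hlast, hdrop]
    calc (∫⁻ s in Set.Ioc (0:ℝ) 1, lB d (E ++ F') (x - s • w))
        = ∫⁻ s in Set.Ioc (0:ℝ) 1, ∫⁻ y, lB d E (x - s • w - y) * lB d F' y := by
          exact lintegral_congr fun s => ih F' hF'len hliF' (x - s • w)
      _ = ∫⁻ s in Set.Ioc (0:ℝ) 1, ∫⁻ z, lB d E (x - z) * lB d F' (z - s • w) := by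
          refine lintegral_congr fun s => ?_
          rw [← lintegral_sub_right_eq_self
            (fun y => lB d E (x - s • w - y) * lB d F' y) (s • w)]
          refine lintegral_congr fun z => ?_
          congr 2
          abel
      _ = ∫⁻ z, ∫⁻ s in Set.Ioc (0:ℝ) 1, lB d E (x - z) * lB d F' (z - s • w) := by
          refine lintegral_lintegral_swap ?_
          refine Measurable.aemeasurable ?_
          refine Measurable.mul ?_ ?_
          · exact (measurable_lB d E).comp
              (measurable_const.sub (measurable_snd))
          · exact (measurable_lB d F').comp
              (measurable_snd.sub (measurable_fst.smul_const _))
      _ = ∫⁻ z, lB d E (x - z) * ∫⁻ s in Set.Ioc (0:ℝ) 1, lB d F' (z - s • w) := by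
          exact lintegral_congr fun z => lintegral_const_mul _ (hmF' z)
      _ = ∫⁻ y, lB d E (x - y) * lB d (F' ++ [w]) y := by
          refine lintegral_congr fun z => ?_
          congr 1
          rw [lB_rec d (F' ++ [w]) (by simp; omega) z, List.dropLast_concat,
            List.getLastD_concat]


/-- The box spline of a concatenated list `E ++ F` equals the convolution of
the two box splines: for Lebesgue-a.e. `x`, `M_{E++F}(x) = ∫ M_E(x − y) M_F(y) dy`. -/
theorem boxSpline_append_eq_convolution
    (d : ℕ) (hd : 1 ≤ d)
    (E F : List (Fin d → ℝ)) (hE : d ≤ E.length) (hF : d ≤ F.length)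
    (hliE : LinearIndependent ℝ (fun i : Fin d => E.getD i.val 0))
    (hliF : LinearIndependent ℝ (fun i : Fin d => F.getD i.val 0)) :
    ∀ᵐ x : Fin d → ℝ ∂volume,
      boxSpline d (E ++ F) x = ∫ y, boxSpline d E (x - y) * boxSpline d F y := by
  refine Filter.Eventually.of_forall fun x => ?_
  obtain ⟨m, hm⟩ : ∃ m, F.length = d + m := ⟨F.length - d, by omega⟩
  have hmain := main_lemma d hd E hE m F hm hliF x
  have h1 : boxSpline d (E ++ F) x = (lB d (E ++ F) x).toReal :=
    box_eq_toReal_aux d (E ++ F).length _ le_rfl x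
  have h2 : ∀ y : Fin d → ℝ, boxSpline d E (x - y) * boxSpline d F y =
      (lB d E (x - y) * lB d F y).toReal := by
    intro y
    rw [box_eq_toReal_aux d E.length E le_rfl, box_eq_toReal_aux d F.length F le_rfl,
      ENNReal.toReal_mul]
  rw [h1, hmain]
  have h3 : (∫ y, boxSpline d E (x - y) * boxSpline d F y) =
      ∫ y, (lB d E (x - y) * lB d F y).toReal :=
    MeasureTheory.integral_congr_ae (Filter.Eventually.of_forall h2)
  rw [h3]
  refine (MeasureTheory.integral_toReal ?_ ?_).symm
  · exact (((measurable_lB d E).comp (measurable_const.sub measurable_id)).mul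
      (measurable_lB d F)).aemeasurable
  · exact Filter.Eventually.of_forall fun y =>
      ENNReal.mul_lt_top (lB_ne_top d E _).lt_top (lB_ne_top d F _).lt_top
end

section
/- (Inner products of derivatives of box splines, Speleers.) Let E = (v₁, …, vₙ) and F = (w₁, …, w_m) be two lists of vectors in ℝ^d with n ≥ d, m ≥ d, such that v₁, …, v_d are linearly independent and w₁, …, w_d are linearly independent, and let m_E = (v₁ + ⋯ + vₙ)/2. Let X be a sublist of E of length r and Y a sublist of F of length s. Assume that M_E is r times continuously differentiable, M_F is s times continuously differentiable, and M_{E++F} is (r+s) times continuously differentiable on ℝ^d. Then for every y ∈ ℝ^d, ∫_{ℝ^d} (D_X M_E)(x) · (D_Y M_F)(x + y) dx = (−1)^r · (D_{X++Y} M_{E++F})(2 m_E + y), where E ++ F and X ++ Y denote concatenation of lists and D_X f denotes the iterated directional derivative of f along the vectors in the list X. -/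
open MeasureTheory

set_option maxHeartbeats 1000000

namespace BoxSplineAux

variable {d : ℕ}

/-- the base parallelepiped set -/
def baseSet (d : ℕ) (v : List (Fin d → ℝ)) : Set (Fin d → ℝ) :=
  {x | ∃ t : Fin d → ℝ, (∀ k, t k ∈ Set.Icc (0 : ℝ) 1) ∧ x = ∑ k, t k • v.getD k.val 0}

noncomputable def baseConst (d : ℕ) (v : List (Fin d → ℝ)) : ℝ :=
  |Matrix.det (Matrix.of fun i j : Fin d => v.getD j.val 0 i)|⁻¹

theorem boxSpline_of_le (v : List (Fin d → ℝ)) (h : v.length ≤ d) :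
    boxSpline d v = (baseSet d v).indicator fun _ => baseConst d v := by
  rw [boxSpline, dif_pos h]
  funext x
  by_cases hx : x ∈ baseSet d v
  · rw [Set.indicator_of_mem hx]; exact if_pos hx
  · rw [Set.indicator_of_notMem hx]; exact if_neg hx

theorem boxSpline_of_not_le (v : List (Fin d → ℝ)) (h : ¬ v.length ≤ d) :
    boxSpline d v = fun x => ∫ t in (0:ℝ)..1, boxSpline d v.dropLast (x - t • v.getLastD 0) := by
  rw [boxSpline, dif_neg h]

theorem boxSpline_concat (V : List (Fin d → ℝ)) (w : Fin d → ℝ) (h : d ≤ V.length) :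
    boxSpline d (V ++ [w]) = fun x => ∫ t in (0:ℝ)..1, boxSpline d V (x - t • w) := by
  rw [boxSpline_of_not_le (V ++ [w]) (by simp; omega)]
  simp [List.dropLast_concat, List.getLastD_concat]

/-- the base set is compact -/
theorem isCompact_baseSet (v : List (Fin d → ℝ)) : IsCompact (baseSet d v) := by
  have : baseSet d v =
      (fun t : Fin d → ℝ => ∑ k, t k • v.getD k.val 0) '' (Set.univ.pi fun _ => Set.Icc 0 1) := by
    ext x
    constructor
    · rintro ⟨t, ht, rfl⟩
      exact ⟨t, fun k _ => ht k, rfl⟩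
    · rintro ⟨t, ht, rfl⟩
      exact ⟨t, fun k => ht k (Set.mem_univ k), rfl⟩
  rw [this]
  refine (isCompact_univ_pi fun _ => isCompact_Icc).image ?_
  exact continuous_finset_sum _ fun k _ => ((continuous_apply k).smul continuous_const)

theorem measurable_boxSpline (v : List (Fin d → ℝ)) : Measurable (boxSpline d v) := by
  by_cases h : v.length ≤ d
  · rw [boxSpline_of_le v h]
    exact measurable_const.indicator (isCompact_baseSet v).isClosed.measurableSet
  · rw [boxSpline_of_not_le v h]
    have ih := measurable_boxSpline v.dropLast
    have : (fun x => ∫ t in (0:ℝ)..1, boxSpline d v.dropLast (x - t • v.getLastD 0)) =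
        fun x => ∫ t in Set.Ioc (0:ℝ) 1, boxSpline d v.dropLast (x - t • v.getLastD 0) := by
      funext x
      rw [intervalIntegral.integral_of_le zero_le_one]
    rw [this]
    have hm : StronglyMeasurable
        (fun p : (Fin d → ℝ) × ℝ => boxSpline d v.dropLast (p.1 - p.2 • v.getLastD 0)) := by
      apply Measurable.stronglyMeasurable
      exact ih.comp (measurable_fst.sub (measurable_snd.smul measurable_const))
    exact (hm.integral_prod_right').measurable
termination_by v.length
decreasing_by
  simp only [List.length_dropLast]; omega

theorem abs_boxSpline_le (v : List (Fin d → ℝ)) : ∃ C : ℝ, 0 ≤ C ∧ ∀ x, |boxSpline d v x| ≤ C := by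
  by_cases h : v.length ≤ d
  · refine ⟨|baseConst d v|, abs_nonneg _, fun x => ?_⟩
    rw [boxSpline_of_le v h]
    by_cases hx : x ∈ baseSet d v
    · rw [Set.indicator_of_mem hx]
    · rw [Set.indicator_of_notMem hx]; simp [abs_nonneg]
  · obtain ⟨C, hC0, hC⟩ := abs_boxSpline_le v.dropLast
    refine ⟨C, hC0, fun x => ?_⟩
    rw [boxSpline_of_not_le v h]
    calc |∫ t in (0:ℝ)..1, boxSpline d v.dropLast (x - t • v.getLastD 0)|
        ≤ C * |(1:ℝ) - 0| := by
          rw [← Real.norm_eq_abs]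
          exact intervalIntegral.norm_integral_le_of_norm_le_const fun t _ => hC _
      _ = C := by norm_num
termination_by v.length
decreasing_by
  simp only [List.length_dropLast]; omega

theorem exists_radius_boxSpline (v : List (Fin d → ℝ)) :
    ∃ R : ℝ, ∀ x, boxSpline d v x ≠ 0 → ‖x‖ ≤ R := by
  by_cases h : v.length ≤ d
  · obtain ⟨R, hR⟩ := (isCompact_baseSet v).isBounded.subset_closedBall 0
    refine ⟨R, fun x hx => ?_⟩
    rw [boxSpline_of_le v h] at hx
    have : x ∈ baseSet d v := by
      by_contra hmem
      exact hx (Set.indicator_of_notMem hmem _)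
    simpa [Metric.mem_closedBall, dist_zero_right] using hR this
  · obtain ⟨R, hR⟩ := exists_radius_boxSpline v.dropLast
    refine ⟨R + ‖v.getLastD 0‖, fun x hx => ?_⟩
    rw [boxSpline_of_not_le v h] at hx
    by_contra hbig
    push_neg at hbig
    apply hx
    show (∫ t in (0:ℝ)..1, boxSpline d v.dropLast (x - t • v.getLastD 0)) = 0
    have : ∀ t ∈ Set.uIcc (0:ℝ) 1, boxSpline d v.dropLast (x - t • v.getLastD 0) = 0 := by
      intro t ht
      rw [Set.uIcc_of_le zero_le_one] at ht
      by_contra hne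
      have h1 := hR _ hne
      have h2 : ‖x‖ ≤ ‖x - t • v.getLastD 0‖ + ‖t • v.getLastD 0‖ := by
        calc ‖x‖ = ‖(x - t • v.getLastD 0) + t • v.getLastD 0‖ := by ring_nf
          _ ≤ _ := norm_add_le _ _
      have h3 : ‖t • v.getLastD 0‖ ≤ ‖v.getLastD 0‖ := by
        rw [norm_smul]
        calc ‖t‖ * ‖v.getLastD 0‖ ≤ 1 * ‖v.getLastD 0‖ := by
              apply mul_le_mul_of_nonneg_right _ (norm_nonneg _)
              rw [Real.norm_eq_abs, abs_le]
              exact ⟨by linarith [ht.1], ht.2⟩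
          _ = ‖v.getLastD 0‖ := one_mul _
      linarith
    rw [intervalIntegral.integral_congr (g := fun _ => (0:ℝ)) this]
    simp
termination_by v.length
decreasing_by
  simp only [List.length_dropLast]; omega

theorem hasCompactSupport_boxSpline (v : List (Fin d → ℝ)) :
    HasCompactSupport (boxSpline d v) := by
  obtain ⟨R, hR⟩ := exists_radius_boxSpline v
  refine HasCompactSupport.intro (isCompact_closedBall (0 : Fin d → ℝ) (max R 0)) fun x hx => ?_
  by_contra hne
  apply hx
  rw [Metric.mem_closedBall, dist_zero_right]
  exact le_trans (hR x hne) (le_max_left _ _)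

theorem integrable_boxSpline (v : List (Fin d → ℝ)) : Integrable (boxSpline d v) := by
  obtain ⟨C, hC0, hC⟩ := abs_boxSpline_le v
  have hK := (hasCompactSupport_boxSpline v)
  refine Integrable.mono' (g := (tsupport (boxSpline d v)).indicator fun _ => C) ?_
    (measurable_boxSpline v).aestronglyMeasurable (Filter.Eventually.of_forall fun x => ?_)
  · rw [integrable_indicator_iff hK.isCompact.isClosed.measurableSet]
    exact integrableOn_const hK.isCompact.measure_lt_top.ne
  · by_cases hx : x ∈ tsupport (boxSpline d v)
    · rw [Set.indicator_of_mem hx]; exact hC x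
    · rw [Set.indicator_of_notMem hx, image_eq_zero_of_notMem_tsupport hx]
      simp

def box (n : ℕ) : Set (Fin n → ℝ) := Set.univ.pi fun _ => Set.Icc (0:ℝ) 1

theorem measurableSet_box (n : ℕ) : MeasurableSet (box n) :=
  MeasurableSet.univ_pi fun _ => measurableSet_Icc

theorem volume_box (n : ℕ) : (volume : Measure (Fin n → ℝ)) (box n) = 1 := by
  rw [box, volume_pi_pi]
  simp [Real.volume_Icc]

instance box_finite (n : ℕ) : IsFiniteMeasure ((volume : Measure (Fin n → ℝ)).restrict (box n)) :=
  ⟨by rw [Measure.restrict_apply_univ, volume_box]; exact ENNReal.one_lt_top⟩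

instance Icc_finite : IsFiniteMeasure ((volume : Measure ℝ).restrict (Set.Icc (0:ℝ) 1)) :=
  ⟨by rw [Measure.restrict_apply_univ]; simp [Real.volume_Icc]⟩

variable {d : ℕ}

noncomputable def smear (w : Fin d → ℝ) (f : (Fin d → ℝ) → ℝ) : (Fin d → ℝ) → ℝ :=
  fun x => ∫ t in (0:ℝ)..1, f (x - t • w)

noncomputable def smearList (U : List (Fin d → ℝ)) (f : (Fin d → ℝ) → ℝ) : (Fin d → ℝ) → ℝ :=
  U.foldl (fun g u => smear u g) f

@[simp] theorem smearList_nil (f : (Fin d → ℝ) → ℝ) : smearList [] f = f := rfl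

theorem smearList_concat (U : List (Fin d → ℝ)) (w : Fin d → ℝ) (f : (Fin d → ℝ) → ℝ) :
    smearList (U ++ [w]) f = smear w (smearList U f) := by
  simp [smearList, List.foldl_concat]

theorem sum_concat_aux {n : ℕ} (U : List (Fin d → ℝ)) (hU : U.length = n) (w : Fin d → ℝ)
    (u : Fin (n+1) → ℝ) :
    ∑ i : Fin (n+1), u i • (U ++ [w]).getD i.val 0
      = (∑ i : Fin n, u (Fin.castSucc i) • U.getD i.val 0) + u (Fin.last n) • w := by
  subst hU
  rw [Fin.sum_univ_castSucc]
  congr 1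
  · apply Finset.sum_congr rfl
    intro i _
    congr 1
    exact List.getD_append U [w] 0 i.val i.isLt
  · congr 1
    rw [List.getD_eq_getElem _ _ (by simp)]
    exact List.getElem_concat_length rfl _

theorem smearList_eq_integral (U : List (Fin d → ℝ)) (f : (Fin d → ℝ) → ℝ)
    (hfm : Measurable f) (C : ℝ) (hfb : ∀ x, |f x| ≤ C) :
    ∀ x, smearList U f x
      = ∫ t in box U.length, f (x - ∑ i : Fin U.length, t i • U.getD i.val 0) := by
  induction U using List.reverseRecOn with
  | nil =>
      intro x
      simp only [smearList_nil, List.length_nil]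
      have hbox : box 0 = Set.univ := by
        ext t; simp [box]
      rw [hbox, Measure.restrict_univ]
      simp only [Finset.univ_eq_empty, Finset.sum_empty, sub_zero, integral_const]
      have huniv : (volume : Measure (Fin 0 → ℝ)) Set.univ = 1 := by
        rw [← hbox, volume_box]
      rw [Measure.real, huniv]
      simp
  | append_singleton U w ih =>
      intro x
      set n := U.length with hn
      have hlen : (U ++ [w]).length = n + 1 := by simp [hn]
      rw [smearList_concat]
      -- rewrite goal via length
      rw [hlen]
      have step1 : smear w (smearList U f) x
          = ∫ s in (0:ℝ)..1, ∫ t in box n,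
              f (x - s • w - ∑ i : Fin n, t i • U.getD i.val 0) := by
        rw [smear]
        apply intervalIntegral.integral_congr
        intro s _
        show smearList U f (x - s • w)
            = ∫ t in box n, f (x - s • w - ∑ i : Fin n, t i • U.getD i.val 0)
        rw [ih (x - s • w)]
      rw [step1]
      rw [intervalIntegral.integral_of_le zero_le_one,
        setIntegral_congr_set MeasureTheory.Ioc_ae_eq_Icc]
      set F : ℝ × (Fin n → ℝ) → ℝ :=
        fun p => f (x - p.1 • w - ∑ i : Fin n, p.2 i • U.getD i.val 0) with hF
      have hFm : Measurable F := by
        apply hfm.comp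
        apply Measurable.sub
        · apply Measurable.sub measurable_const
          exact measurable_fst.smul_const w
        · apply Finset.measurable_sum
          intro i _
          exact (measurable_snd.eval).smul_const _
      have hFint : Integrable F
          (((volume : Measure ℝ).restrict (Set.Icc 0 1)).prod
            ((volume : Measure (Fin n → ℝ)).restrict (box n))) := by
        refine Integrable.mono' (integrable_const C) hFm.aestronglyMeasurable ?_
        exact Filter.Eventually.of_forall fun p => hfb _
      have swap : (∫ s in Set.Icc (0:ℝ) 1, ∫ t in box n,
            f (x - s • w - ∑ i : Fin n, t i • U.getD i.val 0))
          = ∫ p, F p ∂(((volume : Measure ℝ).restrict (Set.Icc 0 1)).prod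
              ((volume : Measure (Fin n → ℝ)).restrict (box n))) :=
        (integral_prod F hFint).symm
      rw [swap]
      -- now the measure-preserving step
      set e := MeasurableEquiv.piFinSuccAbove (fun _ : Fin (n+1) => ℝ) (Fin.last n) with he
      have mp : MeasurePreserving e (volume : Measure (Fin (n+1) → ℝ))
          ((volume : Measure ℝ).prod (volume : Measure (Fin n → ℝ))) := by
        have := measurePreserving_piFinSuccAbove (fun _ : Fin (n+1) => (volume : Measure ℝ))
          (Fin.last n)
        rw [volume_pi, MeasureTheory.volume_pi (α := fun _ : Fin n => ℝ)]
        exact this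
      have hS : MeasurableSet ((Set.Icc (0:ℝ) 1) ×ˢ box n) :=
        measurableSet_Icc.prod (measurableSet_box n)
      have hcomp : ∀ u : Fin (n+1) → ℝ,
          e u = (u (Fin.last n), fun j => u ((Fin.last n).succAbove j)) := fun u => rfl
      have hpre : e ⁻¹' ((Set.Icc (0:ℝ) 1) ×ˢ box n) = box (n+1) := by
        ext u
        rw [Set.mem_preimage, hcomp u]
        constructor
        · rintro ⟨h1, h2⟩
          intro i _
          induction i using Fin.lastCases with
          | last => exact h1
          | cast j =>
              have := h2 j (Set.mem_univ j)
              rwa [Fin.succAbove_last] at this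
        · intro hmem
          refine ⟨hmem _ (Set.mem_univ _), fun j _ => hmem _ (Set.mem_univ _)⟩
      have mp' : MeasurePreserving e
          ((volume : Measure (Fin (n+1) → ℝ)).restrict (box (n+1)))
          ((((volume : Measure ℝ)).prod (volume : Measure (Fin n → ℝ))).restrict
            ((Set.Icc (0:ℝ) 1) ×ˢ box n)) := by
        have := mp.restrict_preimage hS
        rwa [hpre] at this
      rw [Measure.prod_restrict, ← mp'.integral_comp e.measurableEmbedding F]
      apply setIntegral_congr_fun (measurableSet_box (n+1))
      intro u _
      show f (x - u (Fin.last n) • w -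
          ∑ i : Fin n, u ((Fin.last n).succAbove i) • U.getD i.val 0)
          = f (x - ∑ i : Fin (n+1), u i • (U ++ [w]).getD i.val 0)
      rw [sum_concat_aux U rfl w u]
      congr 1
      simp only [Fin.succAbove_last]
      rw [sub_sub]
      congr 1
      exact add_comm _ _


theorem list_sum_eq (l : List (Fin d → ℝ)) :
    l.sum = ∑ i : Fin l.length, l.getD i.val 0 := by
  induction l with
  | nil => simp
  | cons x xs ih =>
      rw [List.sum_cons, ih]
      show _ = ∑ i : Fin (xs.length + 1), (x :: xs).getD i.val 0
      rw [Fin.sum_univ_succ]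
      simp


theorem list_sum_eq_of_length (l : List (Fin d → ℝ)) (hl : l.length = d) :
    l.sum = ∑ i : Fin d, l.getD i.val 0 := by
  rw [list_sum_eq]
  exact Fin.sum_congr' (fun i : Fin d => l.getD i.val 0) hl


theorem boxSpline_append (W : List (Fin d → ℝ)) (h : d ≤ W.length) (U : List (Fin d → ℝ)) :
    boxSpline d (W ++ U) = smearList U (boxSpline d W) := by
  induction U using List.reverseRecOn with
  | nil => simp
  | append_singleton U w ih =>
      rw [← List.append_assoc, boxSpline_concat (W ++ U) w (by simp; omega), ih,
        smearList_concat]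
      rfl


theorem boxSpline_symm (v : List (Fin d → ℝ)) (h : d ≤ v.length) (x : Fin d → ℝ) :
    boxSpline d v (v.sum - x) = boxSpline d v x := by
  by_cases hle : v.length ≤ d
  · have hlen : v.length = d := le_antisymm hle h
    rw [boxSpline_of_le v hle]
    have hsum := list_sum_eq_of_length v hlen
    have key : ∀ y : Fin d → ℝ, y ∈ baseSet d v → v.sum - y ∈ baseSet d v := by
      rintro y ⟨t, ht, rfl⟩
      refine ⟨fun k => 1 - t k, fun k => ?_, ?_⟩
      · have hk := ht k
        rw [Set.mem_Icc] at hk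
        show (1:ℝ) - t k ∈ Set.Icc (0:ℝ) 1
        rw [Set.mem_Icc]
        exact ⟨by linarith [hk.2], by linarith [hk.1]⟩
      rw [hsum, ← Finset.sum_sub_distrib]
      congr 1
      funext k
      rw [sub_smul, one_smul]
    have hiff : ∀ y : Fin d → ℝ, (v.sum - y ∈ baseSet d v) ↔ y ∈ baseSet d v := by
      intro y
      constructor
      · intro hy
        have := key _ hy
        simpa using this
      · exact key y
    by_cases hx : x ∈ baseSet d v
    · rw [Set.indicator_of_mem ((hiff x).2 hx), Set.indicator_of_mem hx]
    · rw [Set.indicator_of_notMem hx, Set.indicator_of_notMem (fun c => hx ((hiff x).1 c))]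
  · have hne : v ≠ [] := by
      intro hv; rw [hv] at hle; simp at hle
    have hv' : d ≤ v.dropLast.length := by
      rw [List.length_dropLast]; omega
    have hlast : v.getLastD 0 = v.getLast hne := by
      rw [List.getLastD_eq_getLast?, List.getLast?_eq_getLast hne]
      rfl
    have hsum : v.sum = v.dropLast.sum + v.getLastD 0 := by
      conv_lhs => rw [← List.dropLast_append_getLast hne]
      rw [List.sum_append, List.sum_cons, List.sum_nil, add_zero, hlast]
    rw [boxSpline_of_not_le v hle]
    show (∫ t in (0:ℝ)..1, boxSpline d v.dropLast (v.sum - x - t • v.getLastD 0))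
        = ∫ t in (0:ℝ)..1, boxSpline d v.dropLast (x - t • v.getLastD 0)
    have harg : ∀ t : ℝ, v.sum - x - t • v.getLastD 0
        = v.dropLast.sum - (x - (1 - t) • v.getLastD 0) := by
      intro t
      rw [hsum]
      module
    calc (∫ t in (0:ℝ)..1, boxSpline d v.dropLast (v.sum - x - t • v.getLastD 0))
        = ∫ t in (0:ℝ)..1, boxSpline d v.dropLast (x - (1 - t) • v.getLastD 0) := by
          apply intervalIntegral.integral_congr
          intro t _
          show boxSpline d v.dropLast (v.sum - x - t • v.getLastD 0)
              = boxSpline d v.dropLast (x - (1 - t) • v.getLastD 0)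
          rw [harg t, boxSpline_symm v.dropLast hv' _]
      _ = ∫ t in (0:ℝ)..1, boxSpline d v.dropLast (x - t • v.getLastD 0) := by
          have := intervalIntegral.integral_comp_sub_left (a := (0:ℝ)) (b := 1)
            (fun t => boxSpline d v.dropLast (x - t • v.getLastD 0)) 1
          simpa using this
termination_by v.length
decreasing_by
  simp only [List.length_dropLast]; omega

theorem box_integral_cast {m n : ℕ} (h : m = n) (f : (Fin m → ℝ) → ℝ) (g : (Fin n → ℝ) → ℝ)
    (hfg : ∀ t : Fin n → ℝ, f (fun i => t (Fin.cast h i)) = g t) :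
    ∫ t in box m, f t = ∫ t in box n, g t := by
  subst h
  have : f = g := by
    funext t
    have := hfg t
    simpa using this
  rw [this]

theorem integral_mul_boxSpline_base (G : List (Fin d → ℝ)) (hG : G.length = d)
    (hli : LinearIndependent ℝ (fun i : Fin d => G.getD i.val 0))
    (g : (Fin d → ℝ) → ℝ) (hgm : Measurable g) (z : Fin d → ℝ) :
    ∫ x, g x * boxSpline d G (x + z)
      = ∫ t in box d, g ((∑ i : Fin d, t i • G.getD i.val 0) - z) := by
  set M : Matrix (Fin d) (Fin d) ℝ := Matrix.of fun i j => G.getD j.val 0 i with hM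
  set A : (Fin d → ℝ) →ₗ[ℝ] (Fin d → ℝ) := Matrix.toLin' M with hAdef
  have hA : ∀ t, A t = ∑ i, t i • G.getD i.val 0 := by
    intro t
    rw [hAdef, Matrix.toLin'_apply]
    funext k
    simp only [Matrix.mulVec, dotProduct, hM, Matrix.of_apply, Finset.sum_apply,
      Pi.smul_apply, smul_eq_mul]
    exact Finset.sum_congr rfl fun j _ => mul_comm _ _
  have hker : LinearMap.ker A = ⊥ := by
    rw [LinearMap.ker_eq_bot']
    intro t ht
    rw [hA] at ht
    funext k
    exact Fintype.linearIndependent_iff.1 hli t ht k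
  have hinj : Function.Injective A := LinearMap.ker_eq_bot.1 hker
  have hdet : LinearMap.det A = M.det := LinearMap.det_toLin' M
  have hdetne : M.det ≠ 0 := by
    intro h0
    have := LinearMap.bot_lt_ker_of_det_eq_zero (f := A) (by rw [hdet]; exact h0)
    rw [hker] at this
    exact lt_irrefl _ this
  set Acl := A.toContinuousLinearMap with hAcl
  have hclapp : ∀ t, Acl t = A t := fun t => rfl
  have himg : baseSet d G = Acl '' box d := by
    ext x
    constructor
    · rintro ⟨t, ht, rfl⟩
      exact ⟨t, fun k _ => ht k, (hclapp t).trans (hA t)⟩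
    · rintro ⟨t, ht, rfl⟩
      exact ⟨t, fun k => ht k (Set.mem_univ k), (hclapp t).trans (hA t)⟩
  have hcldet : ContinuousLinearMap.det Acl = M.det := by
    rw [hAcl, ContinuousLinearMap.det, LinearMap.coe_toContinuousLinearMap, hdet]
  calc ∫ x, g x * boxSpline d G (x + z)
      = ∫ x, g (x - z) * boxSpline d G x := by
        rw [show (fun x => g x * boxSpline d G (x + z))
            = fun x => g (x + z - z) * boxSpline d G (x + z) from
          funext fun x => by rw [add_sub_cancel_right]]
        exact integral_add_right_eq_self (fun x => g (x - z) * boxSpline d G x) z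
    _ = ∫ x in baseSet d G, g (x - z) * baseConst d G := by
        rw [boxSpline_of_le G (le_of_eq hG),
          ← integral_indicator (isCompact_baseSet G).isClosed.measurableSet]
        congr 1
        funext x
        by_cases hx : x ∈ baseSet d G
        · rw [Set.indicator_of_mem hx, Set.indicator_of_mem hx]
        · rw [Set.indicator_of_notMem hx, Set.indicator_of_notMem hx, mul_zero]
    _ = ∫ t in box d, |ContinuousLinearMap.det Acl| •
          (g (Acl t - z) * baseConst d G) := by
        rw [himg]
        exact integral_image_eq_integral_abs_det_fderiv_smul volume (measurableSet_box d)
          (fun t _ => Acl.hasFDerivAt.hasFDerivWithinAt)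
          (hinj.injOn)
          (fun x => g (x - z) * baseConst d G)
    _ = ∫ t in box d, g ((∑ i : Fin d, t i • G.getD i.val 0) - z) := by
        apply setIntegral_congr_fun (measurableSet_box d)
        intro t _
        show |ContinuousLinearMap.det Acl| • (g (Acl t - z) * baseConst d G) = _
        rw [hcldet, hclapp, hA, smul_eq_mul]
        have hbc : baseConst d G = |M.det|⁻¹ := rfl
        rw [hbc, mul_comm (g _), ← mul_assoc, mul_inv_cancel₀ (abs_ne_zero.2 hdetne), one_mul]

theorem integral_boxSpline_mul (E : List (Fin d → ℝ)) (hE : d ≤ E.length)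
    (G : List (Fin d → ℝ)) (hGlen : d ≤ G.length)
    (hliG : LinearIndependent ℝ (fun i : Fin d => G.getD i.val 0)) (z : Fin d → ℝ) :
    ∫ x, boxSpline d E x * boxSpline d G (x + z)
      = smearList G (boxSpline d E) (E.sum + z) := by
  obtain ⟨C, hC0, hC⟩ := abs_boxSpline_le (v := E)
  by_cases hle : G.length ≤ d
  · have hGd : G.length = d := le_antisymm hle hGlen
    rw [integral_mul_boxSpline_base G hGd hliG (boxSpline d E) (measurable_boxSpline E) z,
      smearList_eq_integral G (boxSpline d E) (measurable_boxSpline E) C hC (E.sum + z)]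
    symm
    apply box_integral_cast hGd
    intro t
    show boxSpline d E (E.sum + z - ∑ i : Fin G.length,
        t (Fin.cast hGd i) • G.getD i.val 0)
      = boxSpline d E ((∑ i : Fin d, t i • G.getD i.val 0) - z)
    have hsum : (∑ i : Fin G.length, t (Fin.cast hGd i) • G.getD i.val 0)
        = ∑ i : Fin d, t i • G.getD i.val 0 :=
      Fin.sum_congr' (fun i : Fin d => t i • G.getD i.val 0) hGd
    rw [hsum]
    have harg : E.sum + z - (∑ i : Fin d, t i • G.getD i.val 0)
        = E.sum - ((∑ i : Fin d, t i • G.getD i.val 0) - z) := by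
      abel
    rw [harg, boxSpline_symm E hE]
  · have hne : G ≠ [] := by intro h; rw [h] at hle; simp at hle
    have hG'len : d ≤ G.dropLast.length := by
      rw [List.length_dropLast]; omega
    have hgetD : ∀ i : Fin d, G.dropLast.getD i.val 0 = G.getD i.val 0 := by
      intro i
      have h1 : i.val < G.dropLast.length := lt_of_lt_of_le i.isLt hG'len
      have h2 : i.val < G.length := lt_of_lt_of_le i.isLt hGlen
      rw [List.getD_eq_getElem _ _ h1, List.getD_eq_getElem _ _ h2]
      exact List.getElem_dropLast h1
    have hliG' : LinearIndependent ℝ (fun i : Fin d => G.dropLast.getD i.val 0) := by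
      have heq : (fun i : Fin d => G.dropLast.getD i.val 0) = fun i => G.getD i.val 0 :=
        funext hgetD
      rw [heq]; exact hliG
    obtain ⟨C', hC'0, hC'⟩ := abs_boxSpline_le (v := G.dropLast)
    rw [boxSpline_of_not_le G hle]
    show (∫ x, boxSpline d E x *
        ∫ t in (0:ℝ)..1, boxSpline d G.dropLast (x + z - t • G.getLastD 0)) = _
    have hstep : (fun x => boxSpline d E x *
          ∫ t in (0:ℝ)..1, boxSpline d G.dropLast (x + z - t • G.getLastD 0))
        = fun x => ∫ t in Set.Ioc (0:ℝ) 1,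
            boxSpline d E x * boxSpline d G.dropLast (x + (z - t • G.getLastD 0)) := by
      funext x
      rw [intervalIntegral.integral_of_le zero_le_one, ← integral_const_mul]
      congr 1
      funext t
      rw [add_sub_assoc]
    rw [hstep]
    have hKc := hasCompactSupport_boxSpline (d := d) (v := E)
    have hint : Integrable
        (Function.uncurry fun x t => boxSpline d E x *
          boxSpline d G.dropLast (x + (z - t • G.getLastD 0)))
        (volume.prod (volume.restrict (Set.Ioc (0:ℝ) 1))) := by
      have hmeas : AEStronglyMeasurable
          (Function.uncurry fun x t => boxSpline d E x *
            boxSpline d G.dropLast (x + (z - t • G.getLastD 0)))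
          (volume.prod (volume.restrict (Set.Ioc (0:ℝ) 1))) := by
        apply Measurable.aestronglyMeasurable
        apply Measurable.mul
        · exact (measurable_boxSpline E).comp measurable_fst
        · exact (measurable_boxSpline G.dropLast).comp
            (measurable_fst.add (measurable_const.sub (measurable_snd.smul_const _)))
      refine Integrable.mono'
        (g := fun p => Set.indicator
          ((tsupport (boxSpline d E)) ×ˢ (Set.univ : Set ℝ)) (fun _ => C * C') p)
        ?_ hmeas (Filter.Eventually.of_forall fun p => ?_)
      · rw [integrable_indicator_iff
          ((hKc.isCompact.isClosed.measurableSet).prod MeasurableSet.univ)]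
        refine integrableOn_const (ne_of_lt ?_)
        rw [Measure.prod_prod]
        apply ENNReal.mul_lt_top hKc.isCompact.measure_lt_top
        rw [Measure.restrict_apply_univ, Real.volume_Ioc]
        exact ENNReal.ofReal_lt_top
      · obtain ⟨x, t⟩ := p
        show ‖boxSpline d E x * boxSpline d G.dropLast (x + (z - t • G.getLastD 0))‖
          ≤ ((tsupport (boxSpline d E)) ×ˢ (Set.univ : Set ℝ)).indicator
              (fun _ => C * C') (x, t)
        by_cases hx : x ∈ tsupport (boxSpline d E)
        · rw [Set.indicator_of_mem (by exact ⟨hx, Set.mem_univ t⟩)]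
          show |boxSpline d E x * boxSpline d G.dropLast (x + (z - t • G.getLastD 0))| ≤ C * C'
          rw [abs_mul]
          exact mul_le_mul (hC x) (hC' _) (abs_nonneg _) hC0
        · rw [Set.indicator_of_notMem (by intro hc; exact hx hc.1)]
          show |boxSpline d E x * boxSpline d G.dropLast (x + (z - t • G.getLastD 0))| ≤ 0
          rw [image_eq_zero_of_notMem_tsupport hx, zero_mul, abs_zero]
    rw [MeasureTheory.integral_integral_swap hint]
    have hrec : ∀ t : ℝ,
        (∫ x, boxSpline d E x * boxSpline d G.dropLast (x + (z - t • G.getLastD 0)))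
          = smearList G.dropLast (boxSpline d E) (E.sum + z - t • G.getLastD 0) := by
      intro t
      rw [integral_boxSpline_mul E hE G.dropLast hG'len hliG' (z - t • G.getLastD 0)]
      rw [add_sub_assoc]
    rw [MeasureTheory.setIntegral_congr_fun measurableSet_Ioc fun t _ => hrec t]
    rw [← intervalIntegral.integral_of_le zero_le_one]
    have hlast : G.getLastD 0 = G.getLast hne := by
      rw [List.getLastD_eq_getLast?, List.getLast?_eq_getLast hne]
      rfl
    conv_rhs => rw [← List.dropLast_append_getLast hne]
    rw [smearList_concat]
    rw [smear, hlast]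
termination_by G.length
decreasing_by
  simp only [List.length_dropLast]; omega

end BoxSplineAux


/-- The directional derivative `D_u f` : the derivative at `s = 0` of `s ↦ f (x + s u)`. -/
noncomputable def dirDeriv (d : ℕ) (u : Fin d → ℝ) (f : (Fin d → ℝ) → ℝ) :
    (Fin d → ℝ) → ℝ :=
  fun x => deriv (fun s : ℝ => f (x + s • u)) 0

/-- Iterated directional derivative along a list of vectors:
`D_{(u₁,…,u_r)} f = D_{u₁} ⋯ D_{u_r} f`. -/
noncomputable def dirDerivList (d : ℕ) (X : List (Fin d → ℝ)) (f : (Fin d → ℝ) → ℝ) :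
    (Fin d → ℝ) → ℝ :=
  X.foldr (dirDeriv d) f


namespace BoxSplineAux
variable {d : ℕ}

theorem hasDerivAt_curve (x u : Fin d → ℝ) : HasDerivAt (fun s : ℝ => x + s • u) u 0 := by
  have h1 : HasDerivAt (fun s : ℝ => s • u) ((1:ℝ) • u) 0 := (hasDerivAt_id 0).smul_const u
  simpa using h1.const_add x

theorem dirDeriv_eq_fderiv (u : Fin d → ℝ) (f : (Fin d → ℝ) → ℝ)
    (hf : Differentiable ℝ f) :
    dirDeriv d u f = fun x => fderiv ℝ f x u := by
  funext x
  have hcurve := hasDerivAt_curve x u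
  have h0 : x + (0:ℝ) • u = x := by simp
  have hF : HasFDerivAt f (fderiv ℝ f x) (x + (0:ℝ) • u) := by
    rw [h0]; exact (hf x).hasFDerivAt
  exact (hF.comp_hasDerivAt (0:ℝ) hcurve).deriv

theorem contDiff_dirDeriv (u : Fin d → ℝ) (f : (Fin d → ℝ) → ℝ) (n : ℕ)
    (hf : ContDiff ℝ ((n + 1 : ℕ) : ℕ∞) f) :
    ContDiff ℝ ((n : ℕ) : ℕ∞) (dirDeriv d u f) := by
  have hdiff : Differentiable ℝ f := hf.differentiable (by simp)
  rw [dirDeriv_eq_fderiv u f hdiff]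
  have h1 : ContDiff ℝ ((n : ℕ) : ℕ∞) (fderiv ℝ f) := by
    apply hf.fderiv_right
    norm_cast
  exact (ContinuousLinearMap.apply ℝ ℝ u).contDiff.comp h1

theorem hasCompactSupport_dirDeriv (u : Fin d → ℝ) (f : (Fin d → ℝ) → ℝ)
    (hf : HasCompactSupport f) :
    HasCompactSupport (dirDeriv d u f) := by
  apply hf.mono'
  intro x hx
  by_contra hxt
  apply hx
  have hopen : IsOpen (tsupport f)ᶜ := (isClosed_tsupport f).isOpen_compl
  have hcont : Continuous fun s : ℝ => x + s • u := by
    exact continuous_const.add (continuous_id.smul continuous_const)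
  have hmem : ∀ᶠ s : ℝ in nhds 0, (x + s • u) ∈ (tsupport f)ᶜ := by
    apply hcont.continuousAt.eventually_mem
    apply hopen.mem_nhds
    simpa using hxt
  have hev : (fun s : ℝ => f (x + s • u)) =ᶠ[nhds 0] fun _ => (0:ℝ) :=
    hmem.mono fun s hs => image_eq_zero_of_notMem_tsupport hs
  show dirDeriv d u f x = 0
  rw [dirDeriv, hev.deriv_eq]
  simp

theorem dirDerivList_cons (v : Fin d → ℝ) (Z : List (Fin d → ℝ)) (f : (Fin d → ℝ) → ℝ) :
    dirDerivList d (v :: Z) f = dirDeriv d v (dirDerivList d Z f) := rfl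

theorem contDiff_dirDerivList (Z : List (Fin d → ℝ)) (f : (Fin d → ℝ) → ℝ) (n : ℕ)
    (hf : ContDiff ℝ ((Z.length + n : ℕ) : ℕ∞) f) :
    ContDiff ℝ ((n : ℕ) : ℕ∞) (dirDerivList d Z f) := by
  induction Z generalizing n with
  | nil => simpa [dirDerivList] using hf
  | cons v Z ih =>
      rw [dirDerivList_cons]
      apply contDiff_dirDeriv
      apply ih
      have : Z.length + (n + 1) = (v :: Z).length + n := by simp; omega
      rw [this]
      exact hf

theorem hasCompactSupport_dirDerivList (Z : List (Fin d → ℝ)) (f : (Fin d → ℝ) → ℝ)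
    (hf : HasCompactSupport f) :
    HasCompactSupport (dirDerivList d Z f) := by
  induction Z with
  | nil => exact hf
  | cons v Z ih => exact hasCompactSupport_dirDeriv v _ ih

end BoxSplineAux

namespace BoxSplineAux
variable {d : ℕ}

noncomputable def pairing (A B : (Fin d → ℝ) → ℝ) : (Fin d → ℝ) → ℝ :=
  fun z => ∫ x, A x * B (x + z)

theorem pairing_eq_conv (A B : (Fin d → ℝ) → ℝ) :
    pairing A B = MeasureTheory.convolution (fun x => A (-x)) B
      (ContinuousLinearMap.mul ℝ ℝ) volume := by
  funext z
  rw [pairing]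
  calc (∫ x, A x * B (x + z))
      = ∫ x, A (- -x) * B (z - -x) := by
        congr 1
        funext x
        rw [neg_neg, sub_neg_eq_add, add_comm z x]
    _ = ∫ t, A (-t) * B (z - t) :=
        integral_neg_eq_self (fun t => A (-t) * B (z - t)) volume
    _ = MeasureTheory.convolution (fun x => A (-x)) B
          (ContinuousLinearMap.mul ℝ ℝ) volume z := by
        rw [MeasureTheory.convolution_def]
        congr 1

theorem pairing_eq_conv' (A B : (Fin d → ℝ) → ℝ) (z : Fin d → ℝ) :
    pairing A B z = MeasureTheory.convolution (fun x => B (-x)) A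
      (ContinuousLinearMap.mul ℝ ℝ) volume (-z) := by
  rw [MeasureTheory.convolution_def]
  calc pairing A B z
      = ∫ x, A x * B (x + z) := rfl
    _ = ∫ x, (fun y => B y * A (y - z)) (x + z) := by
        congr 1
        funext x
        show A x * B (x + z) = B (x + z) * A (x + z - z)
        rw [add_sub_cancel_right, mul_comm]
    _ = ∫ x, B x * A (x - z) := integral_add_right_eq_self (fun y => B y * A (y - z)) z
    _ = ∫ x, B (-x) * A (-x - z) :=
        (integral_neg_eq_self (fun y => B y * A (y - z)) volume).symm
    _ = ∫ t, (ContinuousLinearMap.mul ℝ ℝ) (B (-t)) (A (-z - t)) := by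
        congr 1
        funext x
        have : -x - z = -z - x := by abel
        rw [this]
        rfl

end BoxSplineAux

namespace BoxSplineAux
variable {d : ℕ}

theorem dirDeriv_pairing_right (A B : (Fin d → ℝ) → ℝ) (u : Fin d → ℝ)
    (hA : Continuous A) (hB : ContDiff ℝ 1 B) (hBc : HasCompactSupport B) :
    dirDeriv d u (pairing A B) = pairing A (dirDeriv d u B) := by
  have hloc : MeasureTheory.LocallyIntegrable (fun x => A (-x)) volume :=
    (hA.comp continuous_neg).locallyIntegrable
  funext z
  rw [pairing_eq_conv A B, dirDeriv]
  have hfd := hBc.hasFDerivAt_convolution_right (ContinuousLinearMap.mul ℝ ℝ) hloc hB (z + (0:ℝ) • u)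
  have hcd : HasDerivAt
      (fun s : ℝ => MeasureTheory.convolution (fun x => A (-x)) B
        (ContinuousLinearMap.mul ℝ ℝ) volume (z + s • u))
      ((MeasureTheory.convolution (fun x => A (-x)) (fderiv ℝ B)
        (ContinuousLinearMap.precompR (Fin d → ℝ) (ContinuousLinearMap.mul ℝ ℝ))
        volume (z + (0:ℝ) • u)) u) 0 :=
    by have h := hfd.comp_hasDerivAt (0:ℝ) (hasDerivAt_curve z u); exact h
  rw [hcd.deriv]
  have h0 : z + (0:ℝ) • u = z := by simp
  rw [h0]
  rw [MeasureTheory.convolution_precompR_apply (L := ContinuousLinearMap.mul ℝ ℝ)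
    hloc (hBc.fderiv ℝ) (hB.continuous_fderiv one_ne_zero) z u]
  rw [pairing_eq_conv A (dirDeriv d u B),
    dirDeriv_eq_fderiv u B (hB.differentiable one_ne_zero)]

theorem dirDeriv_pairing_left (A B : (Fin d → ℝ) → ℝ) (u : Fin d → ℝ)
    (hA : ContDiff ℝ 1 A) (hAc : HasCompactSupport A) (hB : Continuous B) :
    dirDeriv d u (pairing A B) = fun z => -(pairing (dirDeriv d u A) B z) := by
  have hloc : MeasureTheory.LocallyIntegrable (fun x => B (-x)) volume :=
    (hB.comp continuous_neg).locallyIntegrable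
  funext z
  rw [dirDeriv]
  have heq : (fun s : ℝ => pairing A B (z + s • u))
      = fun s => MeasureTheory.convolution (fun x => B (-x)) A
          (ContinuousLinearMap.mul ℝ ℝ) volume (-z + s • (-u)) := by
    funext s
    rw [pairing_eq_conv' A B (z + s • u)]
    congr 1
    rw [neg_add, smul_neg]
  rw [heq]
  have hfd := hAc.hasFDerivAt_convolution_right (ContinuousLinearMap.mul ℝ ℝ) hloc hA
    (-z + (0:ℝ) • (-u))
  have hcd : HasDerivAt
      (fun s : ℝ => MeasureTheory.convolution (fun x => B (-x)) A
        (ContinuousLinearMap.mul ℝ ℝ) volume (-z + s • (-u)))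
      ((MeasureTheory.convolution (fun x => B (-x)) (fderiv ℝ A)
        (ContinuousLinearMap.precompR (Fin d → ℝ) (ContinuousLinearMap.mul ℝ ℝ))
        volume (-z + (0:ℝ) • (-u))) (-u)) 0 :=
    by have h := hfd.comp_hasDerivAt (0:ℝ) (hasDerivAt_curve (-z) (-u)); exact h
  rw [hcd.deriv]
  have h0 : -z + (0:ℝ) • (-u) = -z := by simp
  rw [h0, map_neg]
  rw [MeasureTheory.convolution_precompR_apply (L := ContinuousLinearMap.mul ℝ ℝ)
    hloc (hAc.fderiv ℝ) (hA.continuous_fderiv one_ne_zero) (-z) u]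
  congr 1
  rw [pairing_eq_conv' (dirDeriv d u A) B z,
    dirDeriv_eq_fderiv u A (hA.differentiable one_ne_zero)]

end BoxSplineAux

namespace BoxSplineAux
variable {d : ℕ}

theorem dirDerivList_pairing_right (Y : List (Fin d → ℝ)) (A B : (Fin d → ℝ) → ℝ)
    (hA : Continuous A) (hB : ContDiff ℝ ((Y.length : ℕ) : ℕ∞) B)
    (hBc : HasCompactSupport B) :
    dirDerivList d Y (pairing A B) = pairing A (dirDerivList d Y B) := by
  induction Y with
  | nil => rfl
  | cons u Y ih =>
      rw [dirDerivList_cons, ih (hB.of_le (by exact_mod_cast Nat.le_succ Y.length)),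
        dirDerivList_cons]
      apply dirDeriv_pairing_right A _ u hA
      · have := contDiff_dirDerivList Y B 1 (by
          have hc : (Y.length + 1 : ℕ) = (u :: Y).length := by simp
          rw [hc]; exact hB)
        exact_mod_cast this
      · exact hasCompactSupport_dirDerivList Y B hBc

theorem dirDerivList_pairing_left (X : List (Fin d → ℝ)) (A B : (Fin d → ℝ) → ℝ)
    (hA : ContDiff ℝ ((X.length : ℕ) : ℕ∞) A) (hAc : HasCompactSupport A)
    (hB : Continuous B) :
    dirDerivList d X (pairing A B)
      = fun z => ((-1:ℝ) ^ X.length) * pairing (dirDerivList d X A) B z := by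
  induction X with
  | nil => funext z; simp [dirDerivList]
  | cons u X ih =>
      rw [dirDerivList_cons, ih (hA.of_le (by exact_mod_cast Nat.le_succ X.length))]
      have hpull : dirDeriv d u
            (fun z => ((-1:ℝ) ^ X.length) * pairing (dirDerivList d X A) B z)
          = fun z => ((-1:ℝ) ^ X.length) *
              dirDeriv d u (pairing (dirDerivList d X A) B) z := by
        funext z
        rw [dirDeriv]
        show deriv (fun s => (-1:ℝ) ^ X.length *
          pairing (dirDerivList d X A) B (z + s • u)) 0 = _
        rw [deriv_const_mul_field]
        rfl
      rw [hpull]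
      have h1 : ContDiff ℝ (1 : ℕ∞) (dirDerivList d X A) := by
        have := contDiff_dirDerivList X A 1 (by
          have hc : (X.length + 1 : ℕ) = (u :: X).length := by simp
          rw [hc]; exact hA)
        exact_mod_cast this
      rw [dirDeriv_pairing_left (dirDerivList d X A) B u h1
        (hasCompactSupport_dirDerivList X A hAc) hB]
      funext z
      show (-1:ℝ) ^ X.length * (-(pairing (dirDerivList d (u::X) A) B z))
        = (-1:ℝ) ^ (X.length + 1) * pairing (dirDerivList d (u::X) A) B z
      rw [pow_succ]
      ring

theorem dirDerivList_comp_const_add (Z : List (Fin d → ℝ)) (f : (Fin d → ℝ) → ℝ)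
    (c : Fin d → ℝ) :
    dirDerivList d Z (fun z => f (c + z)) = fun z => dirDerivList d Z f (c + z) := by
  induction Z with
  | nil => rfl
  | cons u Z ih =>
      rw [dirDerivList_cons, ih, dirDerivList_cons]
      funext x
      rw [dirDeriv, dirDeriv]
      show deriv (fun s => dirDerivList d Z f (c + (x + s • u))) 0
        = deriv (fun s => dirDerivList d Z f ((c + x) + s • u)) 0
      congr 1
      funext s
      rw [add_assoc]

theorem dirDerivList_append (X Y : List (Fin d → ℝ)) (f : (Fin d → ℝ) → ℝ) :
    dirDerivList d (X ++ Y) f = dirDerivList d X (dirDerivList d Y f) := by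
  rw [dirDerivList, List.foldr_append]
  rfl

end BoxSplineAux


open BoxSplineAux

/-- Speleers: inner products of derivatives of box splines. For sublists
`X ⊆ E` of length `r` and `Y ⊆ F` of length `s`, with the relevant smoothness,
`∫ (D_X M_E)(x) (D_Y M_F)(x + y) dx = (−1)^r (D_{X++Y} M_{E++F})(2 m_E + y)` for all `y`. -/
theorem boxSpline_deriv_inner_product
    (d : ℕ) (hd : 1 ≤ d)
    (E F : List (Fin d → ℝ)) (hE : d ≤ E.length) (hF : d ≤ F.length)
    (hliE : LinearIndependent ℝ (fun i : Fin d => E.getD i.val 0))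
    (hliF : LinearIndependent ℝ (fun i : Fin d => F.getD i.val 0))
    (X Y : List (Fin d → ℝ)) (hX : X.Sublist E) (hY : Y.Sublist F)
    (r s : ℕ) (hr : X.length = r) (hs : Y.length = s)
    (hsmE : ContDiff ℝ (r : ℕ∞) (boxSpline d E))
    (hsmF : ContDiff ℝ (s : ℕ∞) (boxSpline d F))
    (hsmEF : ContDiff ℝ ((r + s : ℕ) : ℕ∞) (boxSpline d (E ++ F)))
    (mE : Fin d → ℝ) (hmE : mE = (2 : ℝ)⁻¹ • E.sum) :
    ∀ y : Fin d → ℝ,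
      ∫ x, dirDerivList d X (boxSpline d E) x * dirDerivList d Y (boxSpline d F) (x + y) =
        (-1 : ℝ) ^ r *
          dirDerivList d (X ++ Y) (boxSpline d (E ++ F)) ((2 : ℝ) • mE + y) := by
  subst hr hs hmE
  intro y
  have hMEcont : Continuous (boxSpline d E) := hsmE.continuous
  have hMEc := hasCompactSupport_boxSpline (v := E)
  have hMFc := hasCompactSupport_boxSpline (v := F)
  have hBcont : Continuous (dirDerivList d Y (boxSpline d F)) := by
    have := contDiff_dirDerivList Y (boxSpline d F) 0 (by
      have : (Y.length + 0 : ℕ) = Y.length := by omega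
      rw [this]; exact hsmF)
    exact this.continuous
  have hBc := hasCompactSupport_dirDerivList Y (boxSpline d F) hMFc
  have hL1 := dirDerivList_pairing_left X (boxSpline d E)
    (dirDerivList d Y (boxSpline d F)) hsmE hMEc hBcont
  have hneg : ((-1:ℝ) ^ X.length) * ((-1:ℝ) ^ X.length) = 1 := by
    rw [← pow_add]
    exact Even.neg_one_pow (Even.add_self X.length)
  have h1 : pairing (dirDerivList d X (boxSpline d E)) (dirDerivList d Y (boxSpline d F)) y
      = (-1:ℝ) ^ X.length *
        dirDerivList d X (pairing (boxSpline d E) (dirDerivList d Y (boxSpline d F))) y := by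
    rw [congrFun hL1 y, ← mul_assoc, hneg, one_mul]
  have hL2 := dirDerivList_pairing_right Y (boxSpline d E) (boxSpline d F)
    hMEcont hsmF hMFc
  have h3 : pairing (boxSpline d E) (boxSpline d F)
      = fun z => boxSpline d (E ++ F) (E.sum + z) := by
    funext z
    show (∫ x, boxSpline d E x * boxSpline d F (x + z)) = _
    rw [integral_boxSpline_mul E hE F hF hliF z, boxSpline_append E hE F]
  have hsum2 : (2 : ℝ) • ((2 : ℝ)⁻¹ • E.sum) = E.sum := by
    rw [smul_smul]
    norm_num
  show pairing (dirDerivList d X (boxSpline d E)) (dirDerivList d Y (boxSpline d F)) y = _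
  rw [h1, ← hL2, h3, ← dirDerivList_append, dirDerivList_comp_const_add, hsum2]
end

section
/- Let B : ℝ^d → ℝ be Lebesgue integrable with compact support and with ∫_{ℝ^d} B(y) dy = 1, and let n ∈ ℕ. Then for every real polynomial Q in d variables of total degree at most n there exists a unique real polynomial P in d variables of total degree at most n such that for every x ∈ ℝ^d, ∫_{ℝ^d} B(y) · P(x − y) dy = Q(x). In particular, the space spanned by the mollified functions B * p, for p ranging over polynomials of total degree at most n, contains all polynomials of total degree at most n. -/
open MeasureTheory MvPolynomial


namespace Moll13

variable {d : ℕ}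

/-- Substitute `x i ↦ X i - C (X i)`, i.e. expand `P(x - y)` as a polynomial in `x`
with coefficients polynomials in `y`. -/
noncomputable def D (d : ℕ) :
    MvPolynomial (Fin d) ℝ →+* MvPolynomial (Fin d) (MvPolynomial (Fin d) ℝ) :=
  eval₂Hom (C.comp C) (fun i => X i - C (X i))

theorem evalD (P : MvPolynomial (Fin d) ℝ) (x y : Fin d → ℝ) :
    eval x (map (eval y) (D d P)) = eval (x - y) P := by
  induction P using MvPolynomial.induction_on with
  | C r => simp [D]
  | add p q hp hq => simp [hp, hq]
  | mul_X p i hp =>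
    have hDX : D d (X i) = X i - C (X i) := by simp [D]
    rw [map_mul, hDX, map_mul, map_mul, hp]
    simp [Pi.sub_apply]

theorem tdD (P : MvPolynomial (Fin d) ℝ) : (D d P).totalDegree ≤ P.totalDegree := by
  conv_lhs => rw [← support_sum_monomial_coeff P, map_sum]
  refine (totalDegree_finset_sum _ _).trans (Finset.sup_le ?_)
  intro m hm
  refine le_trans ?_ (le_totalDegree hm)
  show (D d (monomial m (coeff m P))).totalDegree ≤ m.sum fun _ e => e
  rw [D, coe_eval₂Hom, eval₂_monomial]
  refine (totalDegree_mul _ _).trans ?_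
  have h1 : (C.comp C (coeff m P) :
      MvPolynomial (Fin d) (MvPolynomial (Fin d) ℝ)).totalDegree = 0 := totalDegree_C _
  rw [h1, zero_add, Finsupp.prod, Finsupp.sum]
  refine (totalDegree_finset_prod _ _).trans (Finset.sum_le_sum ?_)
  intro i _
  have h2 : (X i - C (X i) : MvPolynomial (Fin d) (MvPolynomial (Fin d) ℝ)).totalDegree ≤ 1 := by
    rw [sub_eq_add_neg, ← C_neg]
    refine (totalDegree_add _ _).trans ?_
    simp [totalDegree_X, totalDegree_C]
  refine (totalDegree_pow _ _).trans ?_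
  calc m i * (X i - C (X i) : MvPolynomial (Fin d) (MvPolynomial (Fin d) ℝ)).totalDegree
      ≤ m i * 1 := Nat.mul_le_mul_left _ h2
    _ = m i := mul_one _

theorem mul_key {s t : Fin d →₀ ℕ} {p q : MvPolynomial (Fin d) (MvPolynomial (Fin d) ℝ)}
    (hp : ∀ m ∈ p.support, m ≤ s) (hq : ∀ m ∈ q.support, m ≤ t) :
    (∀ m ∈ (p * q).support, m ≤ s + t) ∧ coeff (s + t) (p * q) = coeff s p * coeff t q := by
  classical
  constructor
  · intro m hm
    obtain ⟨u, hu, v, hv, huv⟩ := Finset.mem_add.mp (support_mul p q hm)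
    exact huv ▸ add_le_add (hp u hu) (hq v hv)
  · rw [coeff_mul]
    refine Finset.sum_eq_single_of_mem (s, t) (Finset.HasAntidiagonal.mem_antidiagonal.mpr rfl) ?_
    rintro ⟨u, v⟩ hmem hne
    by_cases hu : coeff u p = 0
    · simp [hu]
    by_cases hv : coeff v q = 0
    · simp [hv]
    exfalso
    have h1 : u ≤ s := hp u (by simpa [mem_support_iff] using hu)
    have h2 : v ≤ t := hq v (by simpa [mem_support_iff] using hv)
    have h3 : u + v = s + t := Finset.HasAntidiagonal.mem_antidiagonal.mp hmem
    apply hne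
    have hus : u = s := by
      ext i
      have := h1 i; have := h2 i
      have : u i + v i = s i + t i := by
        have h4 : (u + v) i = (s + t) i := by rw [h3]
        simpa [Finsupp.add_apply] using h4
      omega
    have hvt : v = t := by
      ext i
      have := h1 i; have := h2 i
      have : u i + v i = s i + t i := by
        have h4 : (u + v) i = (s + t) i := by rw [h3]
        simpa [Finsupp.add_apply] using h4
      omega
    simp [hus, hvt]

theorem X_pow_key (i : Fin d) (k : ℕ) :
    (∀ m ∈ (((X i - C (X i)) ^ k :
        MvPolynomial (Fin d) (MvPolynomial (Fin d) ℝ))).support, m ≤ Finsupp.single i k) ∧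
      coeff (Finsupp.single i k) (((X i - C (X i)) ^ k :
        MvPolynomial (Fin d) (MvPolynomial (Fin d) ℝ))) = 1 := by
  classical
  induction k with
  | zero =>
    constructor
    · intro m hm
      have : m = 0 := by
        by_contra h
        rw [mem_support_iff] at hm
        simp [pow_zero, coeff_one, h, eq_comm] at hm
      simp [this]
    · simp
  | succ k ih =>
    have hbase : ∀ m ∈ ((X i - C (X i) :
        MvPolynomial (Fin d) (MvPolynomial (Fin d) ℝ))).support, m ≤ Finsupp.single i 1 := by
      intro m hm
      rw [mem_support_iff] at hm
      have : coeff m (X i : MvPolynomial (Fin d) (MvPolynomial (Fin d) ℝ)) ≠ 0 ∨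
          coeff m (C (X i) : MvPolynomial (Fin d) (MvPolynomial (Fin d) ℝ)) ≠ 0 := by
        by_contra h
        push_neg at h
        rw [coeff_sub, h.1, h.2] at hm
        simp at hm
      rcases this with h | h
      · rw [coeff_X'] at h
        split_ifs at h with hh
        · exact le_of_eq hh.symm
        · simp at h
      · rw [coeff_C] at h
        split_ifs at h with hh
        · subst hh; exact zero_le
        · simp at h
    have hbc : coeff (Finsupp.single i 1)
        (X i - C (X i) : MvPolynomial (Fin d) (MvPolynomial (Fin d) ℝ)) = 1 := by
      rw [coeff_sub, coeff_X' , coeff_C]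
      have h1 : (Finsupp.single i 1 : Fin d →₀ ℕ) ≠ 0 := by
        simp [Finsupp.single_eq_zero]
      simp [Ne.symm h1]
    have key := mul_key ih.1 hbase
    have hsingle : Finsupp.single i (k + 1) = Finsupp.single i k + Finsupp.single i 1 := by
      rw [← Finsupp.single_add]
    constructor
    · intro m hm
      rw [pow_succ] at hm
      rw [hsingle]
      exact key.1 m hm
    · rw [pow_succ, hsingle, key.2, ih.2, hbc, one_mul]

theorem prod_key (a : Fin d →₀ ℕ) :
    (∀ m ∈ ((a.prod fun i e => ((X i - C (X i)) ^ e :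
        MvPolynomial (Fin d) (MvPolynomial (Fin d) ℝ)))).support, m ≤ a) ∧
      coeff a (a.prod fun i e => ((X i - C (X i)) ^ e :
        MvPolynomial (Fin d) (MvPolynomial (Fin d) ℝ))) = 1 := by
  classical
  induction a using Finsupp.induction with
  | zero =>
    rw [Finsupp.prod_zero_index]
    constructor
    · intro m hm
      have : m = 0 := by
        by_contra h
        rw [mem_support_iff] at hm
        simp [pow_zero, coeff_one, h, eq_comm] at hm
      simp [this]
    · simp
  | single_add i k f hif hk ih =>
    have hsplit : ((Finsupp.single i k + f).prod fun i e => ((X i - C (X i)) ^ e :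
        MvPolynomial (Fin d) (MvPolynomial (Fin d) ℝ))) =
        ((X i - C (X i)) ^ k) * (f.prod fun i e => (X i - C (X i)) ^ e) := by
      have h1 : ((Finsupp.single i k).prod fun j e => ((X j - C (X j)) ^ e :
          MvPolynomial (Fin d) (MvPolynomial (Fin d) ℝ))) = (X i - C (X i)) ^ k :=
        Finsupp.prod_single_index (pow_zero _)
      rw [Finsupp.prod_add_index (fun _ _ => pow_zero _) (fun _ _ _ _ => pow_add _ _ _), h1]
    have key := mul_key (X_pow_key i k).1 ih.1
    rw [hsplit]
    exact ⟨key.1, by rw [key.2, (X_pow_key i k).2, ih.2, one_mul]⟩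

theorem coeffD_top (P : MvPolynomial (Fin d) ℝ) (m : Fin d →₀ ℕ)
    (h : P.totalDegree ≤ m.sum fun _ e => e) :
    coeff m (D d P) = C (coeff m P) := by
  classical
  conv_lhs => rw [← support_sum_monomial_coeff P, map_sum]
  rw [coeff_sum]
  have hterm : ∀ a ∈ P.support, coeff m (D d (monomial a (coeff a P))) =
      if a = m then C (coeff a P) else 0 := by
    intro a ha
    rw [D, coe_eval₂Hom, eval₂_monomial]
    have hc : (C.comp C) (coeff a P) = (C (C (coeff a P)) :
        MvPolynomial (Fin d) (MvPolynomial (Fin d) ℝ)) := rfl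
    rw [hc, coeff_C_mul]
    by_cases hma : a = m
    · subst hma
      rw [(prod_key a).2, mul_one, if_pos rfl]
    · rw [if_neg hma]
      have : coeff m (a.prod fun i e => ((X i - C (X i)) ^ e :
          MvPolynomial (Fin d) (MvPolynomial (Fin d) ℝ))) = 0 := by
        by_contra hme
        have hle : m ≤ a := (prod_key a).1 m (mem_support_iff.mpr hme)
        -- degree comparison forces m = a
        have hsum : (a.sum fun _ e => e) ≤ m.sum fun _ e => e :=
          le_trans (le_totalDegree ha) h
        have hma' : m = a := by
          by_contra hne
          have hsupp : m.support ⊆ a.support := fun j hj => by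
            rw [Finsupp.mem_support_iff] at hj ⊢
            have := hle j
            omega
          have hmsum : (m.sum fun _ e => e) = ∑ j ∈ a.support, m j :=
            Finsupp.sum_of_support_subset _ hsupp _ (fun _ _ => rfl)
          have hasum : (a.sum fun _ e => e) = ∑ j ∈ a.support, a j := rfl
          obtain ⟨j, hj⟩ : ∃ j, m j ≠ a j := by
            by_contra hall
            push_neg at hall
            exact hne (Finsupp.ext hall)
          have hjlt : m j < a j := lt_of_le_of_ne (hle j) hj
          have hjmem : j ∈ a.support := Finsupp.mem_support_iff.mpr (by omega)
          have : ∑ j ∈ a.support, m j < ∑ j ∈ a.support, a j :=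
            Finset.sum_lt_sum (fun j _ => hle j) ⟨j, hjmem, hjlt⟩
          omega
        exact hma hma'.symm
      rw [this, mul_zero]
  rw [Finset.sum_congr rfl hterm, Finset.sum_ite_eq' P.support m (fun a => C (coeff a P))]
  split_ifs with hm
  · rfl
  · rw [notMem_support_iff.mp hm, map_zero]

section Analytic

variable {d : ℕ} {B : (Fin d → ℝ) → ℝ}

theorem integrable_mul_cont (hB : Integrable B) (hBc : HasCompactSupport B)
    {f : (Fin d → ℝ) → ℝ} (hf : Continuous f) :
    Integrable (fun y => B y * f y) := by
  obtain ⟨C0, hC0⟩ := hBc.exists_bound_of_continuousOn hf.continuousOn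
  refine (hB.norm.const_mul C0).mono'
    (hB.aestronglyMeasurable.mul hf.aestronglyMeasurable) ?_
  filter_upwards with y
  by_cases hy : y ∈ tsupport B
  · calc ‖B y * f y‖ = ‖f y‖ * ‖B y‖ := by rw [norm_mul, mul_comm]
      _ ≤ C0 * ‖B y‖ := by
          exact mul_le_mul_of_nonneg_right (hC0 y hy) (norm_nonneg _)
  · rw [image_eq_zero_of_notMem_tsupport hy]
    simp

/-- The mollified polynomial. -/
noncomputable def Tf (B : (Fin d → ℝ) → ℝ) (P : MvPolynomial (Fin d) ℝ) :
    MvPolynomial (Fin d) ℝ :=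
  ∑ m ∈ (D d P).support, monomial m (∫ y, B y * eval y (coeff m (D d P)))

theorem coeff_Tf (P : MvPolynomial (Fin d) ℝ) (m : Fin d →₀ ℕ) :
    coeff m (Tf B P) = ∫ y, B y * eval y (coeff m (D d P)) := by
  classical
  rw [Tf, coeff_sum]
  simp only [coeff_monomial]
  rw [Finset.sum_ite_eq' ((D d P).support) m
    (fun m' => ∫ y, B y * eval y (coeff m' (D d P)))]
  split_ifs with hm
  · rfl
  · rw [notMem_support_iff.mp hm]
    simp

theorem totalDegree_Tf (P : MvPolynomial (Fin d) ℝ) :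
    (Tf B P).totalDegree ≤ P.totalDegree := by
  refine (totalDegree_finset_sum _ _).trans (Finset.sup_le ?_)
  intro m hm
  by_cases hc : (∫ y, B y * eval y (coeff m (D d P))) = 0
  · simp [hc]
  · rw [totalDegree_monomial _ hc]
    exact le_trans (le_totalDegree hm) (tdD P)

theorem eval_Tf (hB : Integrable B) (hBc : HasCompactSupport B)
    (P : MvPolynomial (Fin d) ℝ) (x : Fin d → ℝ) :
    ∫ y, B y * eval (x - y) P = eval x (Tf B P) := by
  have key : ∀ y : Fin d → ℝ, eval (x - y) P =
      ∑ m ∈ (D d P).support, eval y (coeff m (D d P)) * ∏ i ∈ m.support, x i ^ m i := by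
    intro y
    rw [← evalD P x y, eval_eq]
    rw [Finset.sum_subset (support_map_subset (eval y) (D d P))]
    · simp only [coeff_map]
    · intro m _ hm
      rw [notMem_support_iff.mp hm, zero_mul]
  have hint : ∀ m ∈ (D d P).support, Integrable (fun y =>
      B y * (eval y (coeff m (D d P)) * ∏ i ∈ m.support, x i ^ m i)) := by
    intro m _
    exact integrable_mul_cont hB hBc
      ((MvPolynomial.continuous_eval _).mul continuous_const)
  calc ∫ y, B y * eval (x - y) P
      = ∫ y, ∑ m ∈ (D d P).support,
          B y * (eval y (coeff m (D d P)) * ∏ i ∈ m.support, x i ^ m i) := by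
        congr 1; funext y; rw [key y, Finset.mul_sum]
    _ = ∑ m ∈ (D d P).support,
          ∫ y, B y * (eval y (coeff m (D d P)) * ∏ i ∈ m.support, x i ^ m i) :=
        integral_finset_sum _ hint
    _ = eval x (Tf B P) := by
        rw [Tf, map_sum]
        refine Finset.sum_congr rfl fun m _ => ?_
        rw [eval_monomial]
        have : ∀ y, B y * (eval y (coeff m (D d P)) * ∏ i ∈ m.support, x i ^ m i) =
            (B y * eval y (coeff m (D d P))) * ∏ i ∈ m.support, x i ^ m i := by
          intro y; ring
        rw [funext this, integral_mul_const]
        rfl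

theorem Tf_add (hB : Integrable B) (hBc : HasCompactSupport B)
    (P Q : MvPolynomial (Fin d) ℝ) : Tf B (P + Q) = Tf B P + Tf B Q := by
  ext m
  rw [coeff_add, coeff_Tf, coeff_Tf, coeff_Tf, map_add, coeff_add, ← integral_add
    (integrable_mul_cont hB hBc (MvPolynomial.continuous_eval _))
    (integrable_mul_cont hB hBc (MvPolynomial.continuous_eval _))]
  congr 1; funext y
  rw [map_add, mul_add]

theorem Tf_smul (r : ℝ) (P : MvPolynomial (Fin d) ℝ) :
    Tf B (r • P) = r • Tf B P := by
  ext m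
  rw [coeff_smul, coeff_Tf, coeff_Tf, smul_eq_mul]
  have h1 : coeff m (D d (r • P)) = C r * coeff m (D d P) := by
    rw [MvPolynomial.smul_eq_C_mul, map_mul]
    have : D d (C r) = C (C r) := by simp [D]
    rw [this, coeff_C_mul]
  have h2 : ∀ y, B y * eval y (coeff m (D d (r • P))) =
      r * (B y * eval y (coeff m (D d P))) := by
    intro y; rw [h1, map_mul, eval_C]; ring
  rw [funext h2, integral_const_mul]

theorem Tf_injective (hB : Integrable B) (hB1 : ∫ y, B y = 1)
    (P : MvPolynomial (Fin d) ℝ) (hP : Tf B P = 0) : P = 0 := by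
  by_contra h
  obtain ⟨m, hm, hdeg⟩ := Finset.exists_mem_eq_sup P.support
    (support_nonempty.mpr h) (fun s => s.sum fun _ e => e)
  have hkey : coeff m (Tf B P) = coeff m P := by
    rw [coeff_Tf, coeffD_top P m (le_of_eq hdeg)]
    have : ∀ y, B y * eval y (C (coeff m P) : MvPolynomial (Fin d) ℝ) =
        B y * coeff m P := by intro y; rw [eval_C]
    rw [funext this, integral_mul_const, hB1, one_mul]
  rw [hP, coeff_zero] at hkey
  exact mem_support_iff.mp hm hkey.symm

end Analytic

end Moll13


open MeasureTheory

/-- If moreover `∫ B = 1`, then for every polynomial `Q` of total degree at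
most `n` there is a unique polynomial `P` of total degree at most `n` with
`∫ B(y) P(x − y) dy = Q(x)` for all `x`; in particular, every polynomial of total degree
at most `n` lies in the span of the mollified functions `B * p` for `p` of total degree
at most `n`. -/
theorem mollification_bijective_on_polynomials
    (d n : ℕ) (B : (Fin d → ℝ) → ℝ)
    (hB : Integrable B) (hBc : HasCompactSupport B)
    (hB1 : ∫ y, B y = 1) :
    (∀ Q : MvPolynomial (Fin d) ℝ, Q.totalDegree ≤ n →
      ∃! P : MvPolynomial (Fin d) ℝ, P.totalDegree ≤ n ∧
        ∀ x : Fin d → ℝ,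
          ∫ y, B y * MvPolynomial.eval (x - y) P = MvPolynomial.eval x Q) ∧
    (∀ Q : MvPolynomial (Fin d) ℝ, Q.totalDegree ≤ n →
      (fun x : Fin d → ℝ => MvPolynomial.eval x Q) ∈
        Submodule.span ℝ
          {h : (Fin d → ℝ) → ℝ | ∃ p : MvPolynomial (Fin d) ℝ, p.totalDegree ≤ n ∧
            h = fun x => ∫ y, B y * MvPolynomial.eval (x - y) p}) := by
  classical
  have main : ∀ Q : MvPolynomial (Fin d) ℝ, Q.totalDegree ≤ n →
      ∃! P : MvPolynomial (Fin d) ℝ, P.totalDegree ≤ n ∧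
        ∀ x : Fin d → ℝ,
          ∫ y, B y * MvPolynomial.eval (x - y) P = MvPolynomial.eval x Q := by
    intro Q hQ
    set V := MvPolynomial.restrictTotalDegree (Fin d) ℝ n with hV
    let T : V →ₗ[ℝ] V :=
      { toFun := fun P => ⟨Moll13.Tf B P.1, (MvPolynomial.mem_restrictTotalDegree _ _ _).mpr
          ((Moll13.totalDegree_Tf _).trans
            ((MvPolynomial.mem_restrictTotalDegree _ _ _).mp P.2))⟩
        map_add' := fun P Q => Subtype.ext (Moll13.Tf_add hB hBc _ _)
        map_smul' := fun r P => Subtype.ext (Moll13.Tf_smul r _) }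
    have hTval : ∀ P : V, (T P).1 = Moll13.Tf B P.1 := fun _ => rfl
    have hTinj : Function.Injective T := by
      rw [← LinearMap.ker_eq_bot, LinearMap.ker_eq_bot']
      intro v hv
      have h0 : Moll13.Tf B v.1 = 0 := congrArg Subtype.val hv
      exact Subtype.ext (Moll13.Tf_injective hB hB1 _ h0)
    have hTsurj : Function.Surjective T := LinearMap.surjective_of_injective hTinj
    obtain ⟨P, hP⟩ := hTsurj ⟨Q, (MvPolynomial.mem_restrictTotalDegree _ _ _).mpr hQ⟩
    have hPQ : Moll13.Tf B P.1 = Q := congrArg Subtype.val hP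
    refine ⟨P.1, ⟨(MvPolynomial.mem_restrictTotalDegree _ _ _).mp P.2, fun x => ?_⟩, ?_⟩
    · rw [Moll13.eval_Tf hB hBc, hPQ]
    · rintro P' ⟨hP'deg, hP'eq⟩
      have hTP' : Moll13.Tf B P' = Q := MvPolynomial.funext fun x => by
        rw [← Moll13.eval_Tf hB hBc]
        exact hP'eq x
      have heq : T ⟨P', (MvPolynomial.mem_restrictTotalDegree _ _ _).mpr hP'deg⟩ = T P :=
        Subtype.ext (by rw [hTval, hTval, hTP', hPQ])
      exact congrArg Subtype.val (hTinj heq)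
  refine ⟨main, ?_⟩
  intro Q hQ
  obtain ⟨P, ⟨hPdeg, hPeq⟩, -⟩ := main Q hQ
  refine Submodule.subset_span ⟨P, hPdeg, ?_⟩
  funext x
  exact (hPeq x).symm
end
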